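/- arXiv:1807.02703 — 7 statements merged into one kernel-verified Lean document; each statement's English description precedes it below -/
import Mathlib

section
/- For a prime p, the vertex connectivity of the zero divisor graph Γ[Z_{p^3}] equals p - 1. -/
/-- The nonzero zero divisors of `ZMod n`. -/
def ZeroDivisors (n : ℕ) : Set (ZMod n) :=
  {x | x ≠ 0 ∧ ∃ y : ZMod n, y ≠ 0 ∧ x * y = 0}

/-- The zero divisor graph of `ZMod n`: vertices are nonzero zero divisors,
distinct vertices adjacent iff their product is zero. -/
def zdGraph (n : ℕ) : SimpleGraph (ZeroDivisors n) where
  Adj u v := u ≠ v ∧ (u : ZMod n) * (v : ZMod n) = 0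
  symm := ⟨fun u v h => ⟨h.1.symm, by rw [mul_comm]; exact h.2⟩⟩
  loopless := ⟨fun u h => h.1 rfl⟩

/-- Vertex connectivity: smallest number of vertices whose deletion leaves a
disconnected graph or a single vertex. -/
noncomputable def vConn {V : Type*} (G : SimpleGraph V) : ℕ :=
  sInf { k | ∃ S : Set V, S.Finite ∧ S.ncard = k ∧
    (¬ (G.induce Sᶜ).Preconnected ∨ ∃ v : V, Sᶜ = {v}) }

/-- Edge connectivity: smallest number of edges whose deletion leaves a
disconnected graph or a graph with no edges. -/
noncomputable def eConn {V : Type*} (G : SimpleGraph V) : ℕ :=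
  sInf { k | ∃ E : Set (Sym2 V), E ⊆ G.edgeSet ∧ E.Finite ∧ E.ncard = k ∧
    (¬ (G.deleteEdges E).Preconnected ∨ G.deleteEdges E = ⊥) }

/-- Minimum degree of a graph. -/
noncomputable def minDeg {V : Type*} (G : SimpleGraph V) : ℕ :=
  sInf { k | ∃ v : V, (G.neighborSet v).ncard = k }

section Aux
variable (p : ℕ)

lemma cube_pos (hp : p.Prime) : 0 < p ^ 3 := pow_pos hp.pos 3

lemma mul_zero_iff (hp : p.Prime) (x y : ZMod (p^3)) :
    x * y = 0 ↔ p^3 ∣ x.val * y.val := by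
  haveI : NeZero (p^3) := ⟨(cube_pos p hp).ne'⟩
  rw [← ZMod.natCast_eq_zero_iff, Nat.cast_mul,
    ZMod.natCast_zmod_val, ZMod.natCast_zmod_val]

lemma mem_zd_iff (hp : p.Prime) (x : ZMod (p^3)) :
    x ∈ ZeroDivisors (p^3) ↔ x ≠ 0 ∧ p ∣ x.val := by
  haveI : NeZero (p^3) := ⟨(cube_pos p hp).ne'⟩
  constructor
  · rintro ⟨hx0, y, hy0, hxy⟩
    refine ⟨hx0, ?_⟩
    rw [mul_zero_iff p hp] at hxy
    by_contra hnd
    have hcop : Nat.Coprime (p^3) x.val := (hp.coprime_iff_not_dvd.mpr hnd).pow_left 3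
    have : p^3 ∣ y.val := hcop.dvd_of_dvd_mul_left hxy
    have hy : y.val ≠ 0 := fun h => hy0 ((ZMod.val_eq_zero y).mp h)
    exact absurd (Nat.le_of_dvd (Nat.pos_of_ne_zero hy) this) (not_le.mpr (ZMod.val_lt y))
  · rintro ⟨hx0, m, hm⟩
    refine ⟨hx0, ((p^2 : ℕ) : ZMod (p^3)), ?_, ?_⟩
    · intro h
      rw [ZMod.natCast_eq_zero_iff] at h
      exact absurd (Nat.le_of_dvd (pow_pos hp.pos 2) h)
        (not_le.mpr (Nat.pow_lt_pow_right hp.one_lt (by norm_num)))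
    · rw [mul_zero_iff p hp]
      rw [ZMod.val_cast_of_lt (Nat.pow_lt_pow_right hp.one_lt (by norm_num)), hm]
      exact ⟨m, by ring⟩

lemma cardA (hp : p.Prime) :
    {x : ZMod (p^3) | x ≠ 0 ∧ p^2 ∣ x.val}.ncard = p - 1 := by
  haveI : NeZero (p^3) := ⟨(cube_pos p hp).ne'⟩
  have hset : {x : ZMod (p^3) | x ≠ 0 ∧ p^2 ∣ x.val}
      = (fun k : ℕ => ((k * p^2 : ℕ) : ZMod (p^3))) '' (Set.Ico 1 p) := by
    ext x
    constructor
    · rintro ⟨hx0, m, hm⟩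
      refine ⟨m, ⟨?_, ?_⟩, ?_⟩
      · by_contra h
        push_neg at h
        interval_cases m
        · exact hx0 ((ZMod.val_eq_zero x).mp (by omega))
      · have := ZMod.val_lt x
        rw [hm] at this
        by_contra h
        push_neg at h
        have : p^3 ≤ p^2 * m := Nat.mul_le_mul_left (p^2) h |>.trans_eq (by ring) |>.trans_eq rfl
        omega
      · show ((m * p^2 : ℕ) : ZMod (p^3)) = x
        rw [mul_comm] at hm
        rw [← hm, ZMod.natCast_zmod_val]
    · rintro ⟨k, ⟨hk1, hkp⟩, rfl⟩
      have hlt : k * p^2 < p^3 := by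
        calc k * p^2 < p * p^2 := (Nat.mul_lt_mul_right (pow_pos hp.pos 2)).mpr hkp
        _ = p^3 := by ring
      have hval : ((k * p^2 : ℕ) : ZMod (p^3)).val = k * p^2 := ZMod.val_cast_of_lt hlt
      constructor
      · intro h
        simp only at h
        rw [h] at hval
        simp [ZMod.val_zero] at hval
        rcases hval with h | h
        · omega
        · exact hp.pos.ne' (by omega)
      · rw [hval]; exact ⟨k, by ring⟩
  rw [hset]
  rw [Set.ncard_image_of_injOn, ← Finset.coe_Ico, Set.ncard_coe_finset, Nat.card_Ico]
  intro a ⟨ha1, hap⟩ b ⟨hb1, hbp⟩ hab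
  have hva : ((a * p^2 : ℕ) : ZMod (p^3)).val = a * p^2 :=
    ZMod.val_cast_of_lt (by calc a * p^2 < p * p^2 := (Nat.mul_lt_mul_right (pow_pos hp.pos 2)).mpr hap
      _ = p^3 := by ring)
  have hvb : ((b * p^2 : ℕ) : ZMod (p^3)).val = b * p^2 :=
    ZMod.val_cast_of_lt (by calc b * p^2 < p * p^2 := (Nat.mul_lt_mul_right (pow_pos hp.pos 2)).mpr hbp
      _ = p^3 := by ring)
  simp only at hab
  have : a * p^2 = b * p^2 := by rw [← hva, ← hvb, hab]
  exact Nat.eq_of_mul_eq_mul_right (pow_pos hp.pos 2) this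

lemma cardC (hp : p.Prime) :
    {x : ZMod (p^3) | ∃ k < p, x.val = p + p^2 * k}.ncard = p := by
  haveI : NeZero (p^3) := ⟨(cube_pos p hp).ne'⟩
  have hp2 : 1 < p := hp.one_lt
  have hlt : ∀ k < p, p + p^2 * k < p^3 := by
    intro k hk
    have : p^2 * k ≤ p^2 * (p-1) := Nat.mul_le_mul_left _ (by omega)
    have h2 : p < p^2 := by nlinarith
    nlinarith
  have hset : {x : ZMod (p^3) | ∃ k < p, x.val = p + p^2 * k}
      = (fun k : ℕ => ((p + p^2 * k : ℕ) : ZMod (p^3))) '' (Set.Iio p) := by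
    ext x
    constructor
    · rintro ⟨k, hk, hval⟩
      exact ⟨k, hk, show ((p + p^2*k : ℕ) : ZMod (p^3)) = x by rw [← hval, ZMod.natCast_zmod_val]⟩
    · rintro ⟨k, hk, rfl⟩
      exact ⟨k, hk, ZMod.val_cast_of_lt (hlt k hk)⟩
  rw [hset, Set.ncard_image_of_injOn, ← Finset.coe_Iio, Set.ncard_coe_finset, Nat.card_Iio]
  intro a ha b hb hab
  have hva := ZMod.val_cast_of_lt (hlt a ha)
  have hvb := ZMod.val_cast_of_lt (hlt b hb)
  simp only at hab
  have h2 : p + p^2 * a = p + p^2 * b := by rw [← hva, ← hvb, hab]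
  have hpp : 0 < p^2 := pow_pos hp.pos 2
  have := Nat.eq_of_mul_eq_mul_left hpp (by omega : p^2 * a = p^2 * b)
  omega

end Aux

/-- κ(Γ[Z_{p³}]) = p - 1. -/
theorem stmt2 (p : ℕ) (hp : p.Prime) :
    vConn (zdGraph (p ^ 3)) = p - 1 := by
  haveI : NeZero (p^3) := ⟨(cube_pos p hp).ne'⟩
  have hp2 : 1 < p := hp.one_lt
  have hppsq : p < p^2 := by nlinarith
  have hpsq_cube : p^2 < p^3 := Nat.pow_lt_pow_right hp.one_lt (by norm_num)
  set V := ZeroDivisors (p^3)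
  -- vertex-level distinguished sets
  set SA : Set V := {v : V | p^2 ∣ (v : ZMod (p^3)).val} with hSA_def
  set SC : Set V := {v : V | ∃ k < p, (v : ZMod (p^3)).val = p + p^2 * k} with hSC_def
  -- images under Subtype.val
  have himA : Subtype.val '' SA = {x : ZMod (p^3) | x ≠ 0 ∧ p^2 ∣ x.val} := by
    ext x
    constructor
    · rintro ⟨⟨x, hx⟩, hdvd, rfl⟩
      exact ⟨hx.1, hdvd⟩
    · rintro ⟨hx0, hdvd⟩
      have hxzd : x ∈ V := by
        rw [mem_zd_iff p hp]
        exact ⟨hx0, dvd_trans (dvd_pow_self p two_ne_zero) hdvd⟩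
      exact ⟨⟨x, hxzd⟩, hdvd, rfl⟩
  have himC : Subtype.val '' SC = {x : ZMod (p^3) | ∃ k < p, x.val = p + p^2 * k} := by
    ext x
    constructor
    · rintro ⟨⟨x, hx⟩, hk, rfl⟩
      exact hk
    · rintro ⟨k, hk, hval⟩
      have hxzd : x ∈ V := by
        rw [mem_zd_iff p hp]
        constructor
        · intro h
          rw [h, ZMod.val_zero] at hval
          omega
        · rw [hval]; exact ⟨1 + p * k, by ring⟩
      exact ⟨⟨x, hxzd⟩, ⟨k, hk, hval⟩, rfl⟩
  have hcardSA : SA.ncard = p - 1 := by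
    rw [← Set.ncard_image_of_injective SA Subtype.val_injective, himA, cardA p hp]
  have hcardSC : SC.ncard = p := by
    rw [← Set.ncard_image_of_injective SC Subtype.val_injective, himC, cardC p hp]
  -- SA and SC are disjoint
  have hAC : ∀ v : V, v ∈ SC → v ∉ SA := by
    rintro v ⟨k, hk, hval⟩ hdvd
    have hdvd' : p^2 ∣ (v : ZMod (p^3)).val := hdvd
    rw [hval, add_comm] at hdvd'
    have : p^2 ∣ p := (Nat.dvd_add_right ⟨k, rfl⟩).mp hdvd'
    exact absurd (Nat.le_of_dvd hp.pos this) (not_le.mpr hppsq)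
  -- adjacency facts
  have adjA : ∀ a v : V, p^2 ∣ (a : ZMod (p^3)).val → a ≠ v → (zdGraph (p^3)).Adj a v := by
    intro a v hdvd hne
    refine ⟨hne, ?_⟩
    rw [mul_zero_iff p hp]
    obtain ⟨s, hs⟩ := hdvd
    obtain ⟨-, t, ht⟩ := (mem_zd_iff p hp _).mp v.2
    rw [hs, ht]
    exact ⟨s * t, by ring⟩
  have nonadj : ∀ u v : V, ¬ p^2 ∣ (u : ZMod (p^3)).val → ¬ p^2 ∣ (v : ZMod (p^3)).val →
      (u : ZMod (p^3)) * (v : ZMod (p^3)) ≠ 0 := by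
    intro u v hu hv h
    rw [mul_zero_iff p hp] at h
    obtain ⟨-, a, ha⟩ := (mem_zd_iff p hp _).mp u.2
    obtain ⟨-, b, hb⟩ := (mem_zd_iff p hp _).mp v.2
    have hpa : ¬ p ∣ a := fun ⟨c, hc⟩ => hu ⟨c, by rw [ha, hc]; ring⟩
    have hpb : ¬ p ∣ b := fun ⟨c, hc⟩ => hv ⟨c, by rw [hb, hc]; ring⟩
    rw [ha, hb] at h
    have h3 : p^3 ∣ p^2 * (a * b) := by rw [show p^2 * (a*b) = p*a*(p*b) by ring]; exact h
    have hab : p ∣ a * b := by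
      rcases h3 with ⟨c, hc⟩
      have : p^2 * (a * b) = p^2 * (p * c) := by rw [hc]; ring
      exact ⟨c, Nat.eq_of_mul_eq_mul_left (pow_pos hp.pos 2) this⟩
    rcases (Nat.Prime.dvd_mul hp).mp hab with h' | h'
    · exact hpa h'
    · exact hpb h'
  -- two special vertices outside SA
  have hvp : ((p : ℕ) : ZMod (p^3)).val = p := ZMod.val_cast_of_lt (hppsq.trans hpsq_cube)
  have hppsq3 : p + p^2 < p^3 := by nlinarith
  have hvw : ((p + p^2 : ℕ) : ZMod (p^3)).val = p + p^2 := ZMod.val_cast_of_lt hppsq3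
  have hu0zd : ((p : ℕ) : ZMod (p^3)) ∈ V := by
    rw [mem_zd_iff p hp]
    exact ⟨fun h => by rw [h, ZMod.val_zero] at hvp; omega, by rw [hvp]⟩
  have hw0zd : ((p + p^2 : ℕ) : ZMod (p^3)) ∈ V := by
    rw [mem_zd_iff p hp]
    refine ⟨fun h => by rw [h, ZMod.val_zero] at hvw; omega, ?_⟩
    rw [hvw]; exact ⟨1 + p, by ring⟩
  set u₀ : V := ⟨_, hu0zd⟩ with hu₀def
  set w₀ : V := ⟨_, hw0zd⟩ with hw₀def
  have hu0SA : u₀ ∉ SA := by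
    intro h
    have h' : p^2 ∣ (u₀ : ZMod (p^3)).val := h
    rw [hvp] at h'
    exact absurd (Nat.le_of_dvd hp.pos h') (not_le.mpr hppsq)
  have hw0SA : w₀ ∉ SA := by
    intro h
    have h' : p^2 ∣ (w₀ : ZMod (p^3)).val := h
    rw [hvw, add_comm] at h'
    have : p^2 ∣ p := (Nat.dvd_add_right ⟨1, (mul_one _).symm⟩).mp h'
    exact absurd (Nat.le_of_dvd hp.pos this) (not_le.mpr hppsq)
  have huw : u₀ ≠ w₀ := by
    intro h
    have : ((p : ℕ) : ZMod (p^3)).val = ((p + p^2 : ℕ) : ZMod (p^3)).val := by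
      exact congrArg ZMod.val (congrArg Subtype.val h)
    rw [hvp, hvw] at this
    have : 0 < p^2 := pow_pos hp.pos 2
    omega
  -- removing SA disconnects the graph
  have hbot : (zdGraph (p^3)).induce SAᶜ = ⊥ := by
    ext a b
    simp only [SimpleGraph.comap_adj, SimpleGraph.bot_adj, iff_false]
    rintro ⟨-, hmul⟩
    exact nonadj a.1 b.1 a.2 b.2 hmul
  have hmem : (p - 1) ∈ { k | ∃ S : Set V, S.Finite ∧ S.ncard = k ∧
      (¬ ((zdGraph (p^3)).induce Sᶜ).Preconnected ∨ ∃ v : V, Sᶜ = {v}) } := by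
    refine ⟨SA, Set.toFinite _, hcardSA, Or.inl ?_⟩
    intro h
    have := h ⟨u₀, hu0SA⟩ ⟨w₀, hw0SA⟩
    rw [hbot, SimpleGraph.reachable_bot] at this
    exact huw (congrArg Subtype.val this)
  refine le_antisymm (Nat.sInf_le hmem) (le_csInf ⟨_, hmem⟩ ?_)
  rintro k ⟨S, hSfin, hScard, hdisj⟩
  by_contra hlt
  push_neg at hlt
  have hSAS : ¬ SA ⊆ S := by
    intro hsub
    have := Set.ncard_le_ncard hsub hSfin
    rw [hcardSA, hScard] at this
    omega
  obtain ⟨a, haA, haS⟩ := Set.not_subset.mp hSAS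
  have hSCS : ¬ SC ⊆ S := by
    intro hsub
    have := Set.ncard_le_ncard hsub hSfin
    rw [hcardSC, hScard] at this
    omega
  obtain ⟨b, hbC, hbS⟩ := Set.not_subset.mp hSCS
  have hba : b ≠ a := fun h => hAC b hbC (h ▸ haA)
  rcases hdisj with hdis | ⟨v, hv⟩
  · apply hdis
    intro u w
    have key : ∀ x : ↥(Sᶜ), ((zdGraph (p^3)).induce Sᶜ).Reachable x ⟨a, haS⟩ := by
      intro x
      by_cases hxa : x.1 = a
      · have : x = (⟨a, haS⟩ : ↥(Sᶜ)) := Subtype.ext hxa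
        rw [this]
      · refine SimpleGraph.Adj.reachable ?_
        show (zdGraph (p^3)).Adj x.1 a
        exact ((adjA a x.1 haA fun h => hxa h.symm).symm)
    exact (key u).trans (key w).symm
  · have ha' : a = v := by
      have : a ∈ ({v} : Set V) := hv ▸ haS
      exact this
    have hb' : b = v := by
      have : b ∈ ({v} : Set V) := hv ▸ hbS
      exact this
    exact hba (hb'.trans ha'.symm)
end

section
/- For a prime p and integer n ≥ 3, the vertex connectivity of the zero divisor graph Γ[Z_{p^n}] equals p - 1. -/
section Aux

variable {p n : ℕ}

lemma zd_cast_ne_zero {m : ℕ} (h0 : m ≠ 0) (hlt : m < p ^ n) :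
    (m : ZMod (p ^ n)) ≠ 0 := by
  rw [Ne, ZMod.natCast_eq_zero_iff]
  intro hdvd
  exact absurd (Nat.le_of_dvd (Nat.pos_of_ne_zero h0) hdvd) (not_le.mpr hlt)

lemma zd_pow_split (hn : 1 ≤ n) : p ^ n = p * p ^ (n - 1) := by
  conv_lhs => rw [show n = 1 + (n - 1) by omega]
  rw [pow_add, pow_one]

lemma zd_mem_zd (hp : p.Prime) (hn : 3 ≤ n) {m : ℕ} (h0 : m ≠ 0) (hlt : m < p ^ n)
    (hdvd : p ∣ m) : ((m : ℕ) : ZMod (p ^ n)) ∈ ZeroDivisors (p ^ n) := by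
  refine ⟨zd_cast_ne_zero h0 hlt, ((p ^ (n - 1) : ℕ) : ZMod (p ^ n)),
    zd_cast_ne_zero (pow_ne_zero _ hp.pos.ne') (Nat.pow_lt_pow_right hp.one_lt (by omega)), ?_⟩
  obtain ⟨c, rfl⟩ := hdvd
  rw [← Nat.cast_mul, ZMod.natCast_eq_zero_iff]
  exact ⟨c, by rw [zd_pow_split (by omega : 1 ≤ n)]; ring⟩

lemma zd_p_dvd_val (hp : p.Prime) {x : ZMod (p ^ n)} (hx : x ∈ ZeroDivisors (p ^ n)) :
    p ∣ x.val := by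
  haveI : NeZero (p ^ n) := ⟨pow_ne_zero n hp.pos.ne'⟩
  by_contra h
  obtain ⟨hx0, y, hy0, hxy⟩ := hx
  have hcop : Nat.Coprime x.val (p ^ n) :=
    Nat.Coprime.pow_right n ((Nat.Prime.coprime_iff_not_dvd hp).mpr h).symm
  have hu : IsUnit x := by
    have := (ZMod.isUnit_iff_coprime x.val (p ^ n)).mpr hcop
    rwa [ZMod.natCast_zmod_val] at this
  exact hy0 ((hu.mul_right_eq_zero).mp hxy)

lemma zd_hub (hp : p.Prime) (hn : 3 ≤ n) (u a : ZeroDivisors (p ^ n))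
    (ha : (p : ZMod (p ^ n)) * (a : ZMod (p ^ n)) = 0) (hne : u ≠ a) :
    (zdGraph (p ^ n)).Adj u a := by
  haveI : NeZero (p ^ n) := ⟨pow_ne_zero n hp.pos.ne'⟩
  refine ⟨hne, ?_⟩
  obtain ⟨c, hc⟩ := zd_p_dvd_val hp u.2
  have hu : (u : ZMod (p ^ n)) = (p : ZMod (p ^ n)) * (c : ZMod (p ^ n)) := by
    rw [← ZMod.natCast_zmod_val (u : ZMod (p ^ n)), hc]
    push_cast
    ring
  rw [hu, show (p : ZMod (p ^ n)) * (c : ZMod (p ^ n)) * (a : ZMod (p ^ n))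
      = (c : ZMod (p ^ n)) * ((p : ZMod (p ^ n)) * (a : ZMod (p ^ n))) by ring, ha, mul_zero]

lemma zd_isolated_reach {V : Type*} {H : SimpleGraph V} {u w : V}
    (h : ∀ x, ¬ H.Adj u x) (hr : H.Reachable u w) : u = w := by
  obtain ⟨walk⟩ := hr
  cases walk with
  | nil => rfl
  | cons hadj _ => exact absurd hadj (h _)

end Aux

/-- for n ≥ 3, κ(Γ[Z_{pⁿ}]) = p - 1. -/
theorem stmt3 (p n : ℕ) (hp : p.Prime) (hn : 3 ≤ n) :
    vConn (zdGraph (p ^ n)) = p - 1 := by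
  haveI : NeZero (p ^ n) := ⟨pow_ne_zero n hp.pos.ne'⟩
  have hp2 : 2 ≤ p := hp.two_le
  have hppos : 0 < p ^ (n - 1) := pow_pos hp.pos _
  have hplt : p ^ (n - 1) < p ^ n := Nat.pow_lt_pow_right hp.one_lt (by omega)
  have hsplit : p ^ n = p * p ^ (n - 1) := zd_pow_split (by omega)
  -- the dominating set A of nonzero multiples of p^(n-1)
  set A : Set (ZeroDivisors (p ^ n)) :=
    {u | (p : ZMod (p ^ n)) * (u : ZMod (p ^ n)) = 0} with hAdef
  -- the map enumerating A
  have hmemf : ∀ i : Fin (p - 1),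
      ((((i : ℕ) + 1) * p ^ (n - 1) : ℕ) : ZMod (p ^ n)) ∈ ZeroDivisors (p ^ n) := by
    intro i
    refine zd_mem_zd hp hn (by positivity) ?_ ⟨(↑i + 1) * p ^ (n - 2), ?_⟩
    · calc ((i : ℕ) + 1) * p ^ (n - 1) < p * p ^ (n - 1) := by
            have := i.2; exact (Nat.mul_lt_mul_right hppos).mpr (by omega)
        _ = p ^ n := hsplit.symm
    · rw [show n - 1 = 1 + (n - 2) by omega, pow_add, pow_one]; ring
  set f : Fin (p - 1) → ZeroDivisors (p ^ n) :=
    fun i => ⟨((((i : ℕ) + 1) * p ^ (n - 1) : ℕ) : ZMod (p ^ n)), hmemf i⟩ with hfdef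
  have hfinj : Function.Injective f := by
    intro i j hij
    have h1 : ((((i : ℕ) + 1) * p ^ (n - 1) : ℕ) : ZMod (p ^ n))
        = ((((j : ℕ) + 1) * p ^ (n - 1) : ℕ) : ZMod (p ^ n)) := congrArg Subtype.val hij
    have hi : ((i : ℕ) + 1) * p ^ (n - 1) < p ^ n := by
      rw [hsplit]; exact (Nat.mul_lt_mul_right hppos).mpr (by have := i.2; omega)
    have hj : ((j : ℕ) + 1) * p ^ (n - 1) < p ^ n := by
      rw [hsplit]; exact (Nat.mul_lt_mul_right hppos).mpr (by have := j.2; omega)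
    have h2 : ((i : ℕ) + 1) * p ^ (n - 1) = ((j : ℕ) + 1) * p ^ (n - 1) := by
      have := congrArg ZMod.val h1
      rwa [ZMod.val_cast_of_lt hi, ZMod.val_cast_of_lt hj] at this
    have h3 : (i : ℕ) + 1 = (j : ℕ) + 1 := Nat.eq_of_mul_eq_mul_right hppos h2
    exact Fin.ext (by omega)
  have hArange : A = Set.range f := by
    ext u
    constructor
    · intro hu
      have hpu : (p : ZMod (p ^ n)) * (u : ZMod (p ^ n)) = 0 := hu
      have hval0 : (u : ZMod (p ^ n)).val ≠ 0 := by
        intro h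
        exact u.2.1 (by rw [← ZMod.natCast_zmod_val (u : ZMod (p ^ n)), h, Nat.cast_zero])
      have hdvd : p ^ n ∣ p * (u : ZMod (p ^ n)).val := by
        rw [← ZMod.natCast_eq_zero_iff, Nat.cast_mul, ZMod.natCast_zmod_val]
        exact hpu
      have hstep : ∀ v : ℕ, p ^ n ∣ p * v → p ^ (n - 1) ∣ v := by
        intro v hv
        rw [hsplit] at hv
        exact (Nat.mul_dvd_mul_iff_left hp.pos).mp hv
      obtain ⟨c, hc⟩ := hstep _ hdvd
      have hc0 : c ≠ 0 := by rintro rfl; simp [hc] at hval0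
      have hclt : c < p := by
        have h1 : (u : ZMod (p ^ n)).val < p ^ n := ZMod.val_lt _
        rw [hc, hsplit] at h1
        exact Nat.lt_of_mul_lt_mul_left
          (by rw [mul_comm p (p ^ (n - 1))] at h1; exact h1)
      refine ⟨⟨c - 1, by omega⟩, ?_⟩
      apply Subtype.ext
      show ((((c - 1 : ℕ) + 1) * p ^ (n - 1) : ℕ) : ZMod (p ^ n)) = (u : ZMod (p ^ n))
      rw [show (c - 1) + 1 = c by omega, ← mul_comm (p ^ (n - 1)) c, ← hc,
        ZMod.natCast_zmod_val]
    · rintro ⟨i, rfl⟩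
      show (p : ZMod (p ^ n)) * _ = 0
      rw [hfdef]
      show (p : ZMod (p ^ n)) * ((((i : ℕ) + 1) * p ^ (n - 1) : ℕ) : ZMod (p ^ n)) = 0
      rw [show ((p : ℕ) : ZMod (p ^ n)) = ((p : ℕ) : ZMod (p ^ n)) from rfl, ← Nat.cast_mul,
        ZMod.natCast_eq_zero_iff]
      exact ⟨(i : ℕ) + 1, by rw [hsplit]; ring⟩
  have hAcard : A.ncard = p - 1 := by
    rw [hArange, ← Nat.card_coe_set_eq, Nat.card_range_of_injective hfinj]
    simp
  -- the special vertices vP = p and vQ = p + p^(n-1)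
  have hplt' : p < p ^ n := by
    calc p = p ^ 1 := (pow_one p).symm
      _ < p ^ n := Nat.pow_lt_pow_right hp.one_lt (by omega)
  have hp2lt : p ^ 2 < p ^ n := Nat.pow_lt_pow_right hp.one_lt (by omega)
  have hpp : p < p ^ (n - 1) := by
    calc p = p ^ 1 := (pow_one p).symm
      _ < p ^ (n - 1) := Nat.pow_lt_pow_right hp.one_lt (by omega)
  have hq_lt : p + p ^ (n - 1) < p ^ n := by
    have h2 : 2 * p ^ (n - 1) ≤ p ^ n := by rw [hsplit]; exact Nat.mul_le_mul_right _ hp2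
    omega
  set vP : ZeroDivisors (p ^ n) := ⟨((p : ℕ) : ZMod (p ^ n)),
    zd_mem_zd hp hn hp.pos.ne' hplt' dvd_rfl⟩ with hvPdef
  set vQ : ZeroDivisors (p ^ n) := ⟨((p + p ^ (n - 1) : ℕ) : ZMod (p ^ n)),
    zd_mem_zd hp hn (by positivity) hq_lt ⟨1 + p ^ (n - 2), by
      rw [show n - 1 = 1 + (n - 2) by omega, pow_add, pow_one]; ring⟩⟩ with hvQdef
  have hp2ne : ((p ^ 2 : ℕ) : ZMod (p ^ n)) ≠ 0 :=
    zd_cast_ne_zero (pow_ne_zero _ hp.pos.ne') hp2lt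
  have hPAcomp : ((p : ℕ) : ZMod (p ^ n)) * ((p : ℕ) : ZMod (p ^ n))
      = ((p ^ 2 : ℕ) : ZMod (p ^ n)) := by
    rw [← Nat.cast_mul, ← sq]
  have hQAcomp : ((p : ℕ) : ZMod (p ^ n)) * ((p + p ^ (n - 1) : ℕ) : ZMod (p ^ n))
      = ((p ^ 2 : ℕ) : ZMod (p ^ n)) := by
    rw [← Nat.cast_mul, show p * (p + p ^ (n - 1)) = p ^ 2 + p ^ n by rw [hsplit]; ring,
      Nat.cast_add, ZMod.natCast_self, add_zero]
  have hPA : vP ∉ A := by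
    intro h
    have h' : ((p : ℕ) : ZMod (p ^ n)) * ((p : ℕ) : ZMod (p ^ n)) = 0 := h
    exact hp2ne (hPAcomp ▸ h')
  have hQA : vQ ∉ A := by
    intro h
    have h' : ((p : ℕ) : ZMod (p ^ n)) * ((p + p ^ (n - 1) : ℕ) : ZMod (p ^ n)) = 0 := h
    exact hp2ne (hQAcomp ▸ h')
  have hPQ : vP ≠ vQ := by
    intro h
    have h1 : ((p : ℕ) : ZMod (p ^ n)) = ((p + p ^ (n - 1) : ℕ) : ZMod (p ^ n)) :=
      congrArg Subtype.val h
    have := congrArg ZMod.val h1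
    rw [ZMod.val_cast_of_lt hplt', ZMod.val_cast_of_lt hq_lt] at this
    omega
  -- vP is isolated after removing A
  have hiso : ∀ x : ↥Aᶜ, ¬ ((zdGraph (p ^ n)).induce Aᶜ).Adj ⟨vP, hPA⟩ x := by
    intro x hadj
    have hadj' : (zdGraph (p ^ n)).Adj vP (x : ZeroDivisors (p ^ n)) := hadj
    exact x.2 hadj'.2
  have hmem : (p - 1) ∈ { k | ∃ S : Set (ZeroDivisors (p ^ n)), S.Finite ∧ S.ncard = k ∧
      (¬ ((zdGraph (p ^ n)).induce Sᶜ).Preconnected ∨ ∃ v : ZeroDivisors (p ^ n), Sᶜ = {v}) } := by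
    refine ⟨A, Set.toFinite A, hAcard, Or.inl ?_⟩
    intro hpre
    have := zd_isolated_reach hiso (hpre ⟨vP, hPA⟩ ⟨vQ, hQA⟩)
    exact hPQ (congrArg Subtype.val this)
  unfold vConn
  apply le_antisymm
  · exact Nat.sInf_le hmem
  · apply le_csInf ⟨p - 1, hmem⟩
    rintro k ⟨S, hSfin, hScard, hdisc⟩
    by_contra hk
    have hklt : k < p - 1 := by omega
    have hAS : ¬ A ⊆ S := by
      intro hsub
      have := Set.ncard_le_ncard hsub hSfin
      omega
    obtain ⟨a, haA, haS⟩ := Set.not_subset.mp hAS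
    have haA' : (p : ZMod (p ^ n)) * (a : ZMod (p ^ n)) = 0 := haA
    cases hdisc with
    | inl hnp =>
      apply hnp
      intro u w
      have key : ∀ z : ↥Sᶜ, ((zdGraph (p ^ n)).induce Sᶜ).Reachable z ⟨a, haS⟩ := by
        intro z
        by_cases hz : (z : ZeroDivisors (p ^ n)) = a
        · have hza : z = ⟨a, haS⟩ := Subtype.ext hz
          rw [hza]
        · exact SimpleGraph.Adj.reachable
            (by exact zd_hub hp hn (z : ZeroDivisors (p ^ n)) a haA' hz)
      exact (key u).trans (key w).symm
    | inr hsing =>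
      obtain ⟨v, hv⟩ := hsing
      have hav : a = v := by
        have : a ∈ Sᶜ := haS
        rw [hv] at this
        exact this
      have hsub : (insert vP A) \ {a} ⊆ S := by
        intro z hz
        by_contra hzS
        have : z ∈ Sᶜ := hzS
        rw [hv] at this
        exact hz.2 (by rw [Set.mem_singleton_iff] at this ⊢; rw [this, ← hav])
      have hBcard : (insert vP A).ncard = p := by
        rw [Set.ncard_insert_of_notMem hPA (Set.toFinite A), hAcard]
        omega
      have haB : a ∈ insert vP A := Set.mem_insert_of_mem _ haA
      have hdiffcard : ((insert vP A) \ {a}).ncard = p - 1 := by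
        rw [Set.ncard_diff_singleton_of_mem haB, hBcard]
      have := Set.ncard_le_ncard hsub hSfin
      omega
end

section
/- For distinct primes p and q and positive integers α, β, the vertex connectivity of the zero divisor graph Γ[Z_{p^α q^β}] equals min(p - 1, q - 1). -/

lemma ann_ncard (n r : ℕ) (hn : n ≠ 0) (hr : r ≠ 0) (h : r ∣ n) :
    {x : ZMod n | (r : ZMod n) * x = 0}.ncard = r := by
  haveI : NeZero n := ⟨hn⟩
  have hset : {x : ZMod n | (r : ZMod n) * x = 0}
      = (AddSubgroup.zmultiples ((n / r : ℕ) : ZMod n) : Set (ZMod n)) := by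
    ext x
    simp only [Set.mem_setOf_eq, SetLike.mem_coe, AddSubgroup.mem_zmultiples_iff]
    constructor
    · intro hx
      have hx' : ((r * x.val : ℕ) : ZMod n) = 0 := by
        rw [Nat.cast_mul, ZMod.natCast_zmod_val x]; exact hx
      have hdvd : n ∣ r * x.val := (ZMod.natCast_eq_zero_iff _ _).mp hx'
      have hm : (n / r) ∣ x.val := by
        obtain ⟨m, hm⟩ := h
        subst hm
        rw [Nat.mul_div_cancel_left _ (Nat.pos_of_ne_zero hr)]
        exact (mul_dvd_mul_iff_left hr).mp hdvd
      obtain ⟨c, hc⟩ := hm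
      refine ⟨(c : ℤ), ?_⟩
      have : x = ((x.val : ℕ) : ZMod n) := (ZMod.natCast_zmod_val x).symm
      rw [this, hc]
      push_cast
      rw [zsmul_eq_mul]
      push_cast
      ring
    · rintro ⟨k, rfl⟩
      have : (r : ZMod n) * ((n / r : ℕ) : ZMod n) = 0 := by
        rw [← Nat.cast_mul, Nat.mul_div_cancel' h, ZMod.natCast_self]
      rw [mul_smul_comm, this, smul_zero]
  rw [hset]
  rw [← Nat.card_coe_set_eq]
  rw [SetLike.coe_sort_coe, Nat.card_zmultiples, ZMod.addOrderOf_coe _ hn,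
    Nat.gcd_eq_right (Nat.div_dvd_of_dvd h), Nat.div_div_self h hn]



-- n/r is a nonzero witness
lemma witness_ne (n r : ℕ) (hr : 1 < r) (hrn : r < n) (h : r ∣ n) :
    ((n / r : ℕ) : ZMod n) ≠ 0 := by
  haveI : NeZero n := ⟨by omega⟩
  rw [Ne, ZMod.natCast_eq_zero_iff]
  intro hd
  have h1 : 0 < n / r := Nat.div_pos (le_of_lt hrn) (by omega)
  have h2 : n / r < n := Nat.div_lt_self (by omega) (by omega)
  exact absurd (Nat.le_of_dvd h1 hd) (by omega)

lemma mem_zd_of_ann (n r : ℕ) (hr : r ≠ 0) (hrn : r < n) (h : r ∣ n)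
    {x : ZMod n} (hx : x ≠ 0) (hrx : (r : ZMod n) * x = 0) : x ∈ ZeroDivisors n :=
  ⟨hx, (r : ZMod n), by
    haveI : NeZero n := ⟨by omega⟩
    rw [Ne, ZMod.natCast_eq_zero_iff]
    exact fun hd => absurd (Nat.le_of_dvd (Nat.pos_of_ne_zero hr) hd) (by omega),
    by rw [mul_comm]; exact hrx⟩

lemma annV_ncard (n r : ℕ) (hr : r ≠ 0) (hrn : r < n) (h : r ∣ n) :
    ({v : ZeroDivisors n | (r : ZMod n) * (v : ZMod n) = 0}).ncard = r - 1 := by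
  haveI : NeZero n := ⟨by omega⟩
  have himg : Subtype.val '' {v : ZeroDivisors n | (r : ZMod n) * (v : ZMod n) = 0}
      = {x : ZMod n | (r : ZMod n) * x = 0} \ {0} := by
    ext x
    constructor
    · rintro ⟨⟨v, hv⟩, hmem, rfl⟩
      exact ⟨hmem, hv.1⟩
    · rintro ⟨hx1, hx2⟩
      exact ⟨⟨x, mem_zd_of_ann n r hr hrn h hx2 hx1⟩, hx1, rfl⟩
  have := Set.ncard_image_of_injective
    {v : ZeroDivisors n | (r : ZMod n) * (v : ZMod n) = 0} Subtype.val_injective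
  rw [himg] at this
  rw [← this]
  rw [show ({x : ZMod n | (r : ZMod n) * x = 0} \ {0} : Set (ZMod n))
      = {x : ZMod n | (r : ZMod n) * x = 0} \ {(0 : ZMod n)} from rfl]
  rw [Set.ncard_diff_singleton_of_mem (by simp : (0:ZMod n) ∈ _)]
  rw [ann_ncard n r (by omega) hr h]


lemma cop_zmod (p q n : ℕ) (h : Nat.Coprime p q) : IsCoprime (p : ZMod n) (q : ZMod n) := by
  have h1 : IsCoprime (p : ℤ) (q : ℤ) := Nat.isCoprime_iff_coprime.mpr h
  have h2 := h1.map (Int.castRingHom (ZMod n))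
  simpa using h2

lemma notboth (p q n : ℕ) (h : IsCoprime (p : ZMod n) (q : ZMod n)) {x : ZMod n}
    (h1 : (p : ZMod n) * x = 0) (h2 : (q : ZMod n) * x = 0) : x = 0 := by
  obtain ⟨u, v, huv⟩ := h
  have hx : x = (u * p + v * q) * x := by rw [huv, one_mul]
  rw [hx, show (u * (p:ZMod n) + v * q) * x = u * ((p:ZMod n) * x) + v * ((q:ZMod n)*x) by ring,
    h1, h2, mul_zero, mul_zero, add_zero]

lemma AB_mul (p q n : ℕ) (h : IsCoprime (p : ZMod n) (q : ZMod n)) {a b : ZMod n}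
    (h1 : (p : ZMod n) * a = 0) (h2 : (q : ZMod n) * b = 0) : a * b = 0 := by
  obtain ⟨u, v, huv⟩ := h
  have hx : a * b = (u * p + v * q) * (a * b) := by rw [huv, one_mul]
  rw [hx, show (u * (p:ZMod n) + v * q) * (a*b) = (u * b) * ((p:ZMod n) * a) + (v*a) * ((q:ZMod n)*b) by ring,
    h1, h2, mul_zero, mul_zero, add_zero]

lemma dvd_adj (p n : ℕ) [NeZero n] {x a : ZMod n} (hx : p ∣ x.val)
    (ha : (p : ZMod n) * a = 0) : x * a = 0 := by
  obtain ⟨m, hm⟩ := hx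
  have : x = ((p * m : ℕ) : ZMod n) := by rw [← hm, ZMod.natCast_zmod_val]
  rw [this, show ((p * m : ℕ) : ZMod n) * a = (m : ZMod n) * ((p:ZMod n) * a) by push_cast; ring,
    ha, mul_zero]

lemma zd_dvd (p q α β : ℕ) (hp : p.Prime) (hq : q.Prime) {x y : ZMod (p ^ α * q ^ β)}
    (hx : x ≠ 0) (hy : y ≠ 0) (hxy : x * y = 0) (hn : p ^ α * q ^ β ≠ 0) :
    p ∣ x.val ∨ q ∣ x.val := by
  haveI : NeZero (p ^ α * q ^ β) := ⟨hn⟩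
  by_contra hcon
  push_neg at hcon
  obtain ⟨hpc, hqc⟩ := hcon
  have hc1 : Nat.Coprime (p ^ α) x.val := (Nat.Prime.coprime_iff_not_dvd hp).mpr hpc |>.pow_left α
  have hc2 : Nat.Coprime (q ^ β) x.val := (Nat.Prime.coprime_iff_not_dvd hq).mpr hqc |>.pow_left β
  have hc : Nat.Coprime (p ^ α * q ^ β) x.val := Nat.Coprime.mul hc1 hc2
  have hd : (p ^ α * q ^ β) ∣ x.val * y.val := by
    rw [← ZMod.natCast_eq_zero_iff, Nat.cast_mul, ZMod.natCast_zmod_val,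
      ZMod.natCast_zmod_val, hxy]
  have hdy : (p ^ α * q ^ β) ∣ y.val := hc.dvd_of_dvd_mul_left hd
  have hy0 : y.val ≠ 0 := fun h => hy ((ZMod.val_eq_zero y).mp h)
  have := Nat.le_of_dvd (Nat.pos_of_ne_zero hy0) hdy
  have := ZMod.val_lt y
  omega

lemma exists_adj_of_reachable {V : Type*} {G : SimpleGraph V} {x y : V}
    (h : G.Reachable x y) (hxy : x ≠ y) : ∃ z, G.Adj x z := by
  obtain ⟨w⟩ := h
  cases w with
  | nil => exact absurd rfl hxy
  | cons h _ => exact ⟨_, h⟩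

lemma key (p q α β : ℕ) (hp : p.Prime) (hq : q.Prime) (hpq : p < q)
    (hα : 1 ≤ α) (hβ : 1 ≤ β) :
    vConn (zdGraph (p ^ α * q ^ β)) = p - 1 := by
  set n := p ^ α * q ^ β with hn_def
  have hp2 : 2 ≤ p := hp.two_le
  have hq3 : 3 ≤ q := by have := hq.two_le; omega
  have hpqn : p * q ≤ n := Nat.mul_le_mul (Nat.le_self_pow (by omega) p) (Nat.le_self_pow (by omega) q)
  have h3p : 3 * p ≤ n := le_trans (by nlinarith) hpqn
  have h2q : 2 * q ≤ n := le_trans (by nlinarith) hpqn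
  have hn : n ≠ 0 := by omega
  haveI : NeZero n := ⟨hn⟩
  have hpn : p < n := by omega
  have hqn : q < n := by omega
  have hpd : p ∣ n := dvd_mul_of_dvd_left (dvd_pow_self p (by omega)) _
  have hqd : q ∣ n := dvd_mul_of_dvd_right (dvd_pow_self q (by omega)) _
  have hcop : IsCoprime (p : ZMod n) (q : ZMod n) :=
    cop_zmod p q n ((Nat.coprime_primes hp hq).mpr (by omega))
  -- vertex construction from a natural number divisible by p
  have vertp : ∀ a : ℕ, ¬ n ∣ a → p ∣ a → ((a : ℕ) : ZMod n) ∈ ZeroDivisors n := by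
    intro a ha hpa
    refine ⟨by rwa [Ne, ZMod.natCast_eq_zero_iff],
      ((n / p : ℕ) : ZMod n), witness_ne n p hp.one_lt hpn hpd, ?_⟩
    rw [← Nat.cast_mul, ZMod.natCast_eq_zero_iff]
    obtain ⟨m, rfl⟩ := hpa
    exact ⟨m, by rw [mul_comm p m, mul_assoc, Nat.mul_div_cancel' hpd, mul_comm]⟩
  -- the sets A and B
  set A : Set (ZeroDivisors n) := {v : ZeroDivisors n | (p : ZMod n) * (v : ZMod n) = 0} with hA_def
  set B : Set (ZeroDivisors n) := {v : ZeroDivisors n | (q : ZMod n) * (v : ZMod n) = 0} with hB_def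
  have hA : A.ncard = p - 1 := annV_ncard n p (by omega) hpn hpd
  have hB : B.ncard = q - 1 := annV_ncard n q (by omega) hqn hqd
  -- the cut set witness for the upper bound
  have hverta : (p : ZMod n) ∈ ZeroDivisors n := vertp p (fun h => by have := Nat.le_of_dvd (by omega) h; omega) dvd_rfl
  have hvertb : ((2 * p : ℕ) : ZMod n) ∈ ZeroDivisors n :=
    vertp (2 * p) (fun h => by have := Nat.le_of_dvd (by omega) h; omega) ⟨2, by ring⟩
  have hpA : (⟨_, hverta⟩ : ZeroDivisors n) ∉ A := by
    intro hmem
    have h0 : (p : ZMod n) * ((p : ℕ) : ZMod n) = 0 := hmem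
    rw [← Nat.cast_mul, ZMod.natCast_eq_zero_iff] at h0
    have hqdvd : q ∣ p * p := dvd_trans hqd h0
    rcases (Nat.Prime.dvd_mul hq).mp hqdvd with h | h <;>
      exact absurd (Nat.le_of_dvd (by omega) h) (by omega)
  have h2pA : (⟨_, hvertb⟩ : ZeroDivisors n) ∉ A := by
    intro hmem
    have h0 : (p : ZMod n) * ((2 * p : ℕ) : ZMod n) = 0 := hmem
    rw [← Nat.cast_mul, ZMod.natCast_eq_zero_iff] at h0
    have hqdvd : q ∣ p * (2 * p) := dvd_trans hqd h0
    rcases (Nat.Prime.dvd_mul hq).mp hqdvd with h | h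
    · exact absurd (Nat.le_of_dvd (by omega) h) (by omega)
    · rcases (Nat.Prime.dvd_mul hq).mp h with h | h
      · exact absurd (Nat.le_of_dvd (by omega) h) (by omega)
      · exact absurd (Nat.le_of_dvd (by omega) h) (by omega)
  have hpne2p : ((p : ℕ) : ZMod n) ≠ ((2 * p : ℕ) : ZMod n) := by
    intro h
    have := (ZMod.natCast_eq_natCast_iff _ _ _).mp h
    have := (Nat.modEq_iff_dvd' (by omega)).mp this
    have := Nat.le_of_dvd (by omega) this
    omega
  have hmem : p - 1 ∈ { k | ∃ S : Set (ZeroDivisors n), S.Finite ∧ S.ncard = k ∧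
      (¬ ((zdGraph n).induce Sᶜ).Preconnected ∨ ∃ v : ZeroDivisors n, Sᶜ = {v}) } := by
    refine ⟨A, Set.toFinite A, hA, Or.inl ?_⟩
    intro hpre
    have hr := hpre ⟨⟨_, hverta⟩, hpA⟩ ⟨⟨_, hvertb⟩, h2pA⟩
    have hne : (⟨⟨_, hverta⟩, hpA⟩ : ↥Aᶜ) ≠ ⟨⟨_, hvertb⟩, h2pA⟩ := by
      intro h
      exact hpne2p (congrArg (fun z => ((z.1 : ZeroDivisors n) : ZMod n)) h)
    obtain ⟨u, hu⟩ := exists_adj_of_reachable hr hne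
    exact u.2 (hu.2 : (p : ZMod n) * ((u.1 : ZeroDivisors n) : ZMod n) = 0)
  apply le_antisymm (Nat.sInf_le hmem)
  apply le_csInf ⟨_, hmem⟩
  rintro k ⟨S, hSfin, rfl, hdis⟩
  by_contra hlt
  push_neg at hlt
  have haex : ∃ a, a ∈ A ∧ a ∉ S := by
    by_contra hcon; push_neg at hcon
    have := Set.ncard_le_ncard (fun x hx => hcon x hx) hSfin
    omega
  have hbex : ∃ b, b ∈ B ∧ b ∉ S := by
    by_contra hcon; push_neg at hcon
    have := Set.ncard_le_ncard (fun x hx => hcon x hx) hSfin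
    omega
  obtain ⟨a, haA, haS⟩ := haex
  obtain ⟨b, hbB, hbS⟩ := hbex
  have haA' : (p : ZMod n) * (a : ZMod n) = 0 := haA
  have hbB' : (q : ZMod n) * (b : ZMod n) = 0 := hbB
  have hab_ne : (a : ZMod n) ≠ (b : ZMod n) := by
    intro h
    exact a.2.1 (notboth p q n hcop haA' (h ▸ hbB'))
  have hab_adj : (zdGraph n).Adj a b :=
    ⟨fun h => hab_ne (congrArg _ h), AB_mul p q n hcop haA' hbB'⟩
  rcases hdis with hnp | ⟨v, hv⟩
  · apply hnp
    have claim : ∀ z : ↥Sᶜ, ((zdGraph n).induce Sᶜ).Preconnected →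
        True := fun _ _ => trivial
    have reach : ∀ z : ↥Sᶜ, ((zdGraph n).induce Sᶜ).Reachable z ⟨b, hbS⟩ := by
      intro z
      obtain ⟨hz0, y', hy0, hzy⟩ := z.1.2
      rcases zd_dvd p q α β hp hq hz0 hy0 hzy hn with hdp | hdq
      · by_cases hza : z.1 = a
        · have e : ((zdGraph n).induce Sᶜ).Adj z ⟨b, hbS⟩ := by
            show (zdGraph n).Adj z.1 b
            rw [hza]; exact hab_adj
          exact e.reachable
        · have e1 : ((zdGraph n).induce Sᶜ).Adj z ⟨a, haS⟩ :=
            show (zdGraph n).Adj z.1 a from ⟨hza, dvd_adj p n hdp haA'⟩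
          have e2 : ((zdGraph n).induce Sᶜ).Adj ⟨a, haS⟩ ⟨b, hbS⟩ :=
            show (zdGraph n).Adj a b from hab_adj
          exact e1.reachable.trans e2.reachable
      · by_cases hzb : z.1 = b
        · have : z = (⟨b, hbS⟩ : ↥Sᶜ) := Subtype.ext hzb
          rw [this]
        · have e : ((zdGraph n).induce Sᶜ).Adj z ⟨b, hbS⟩ :=
            show (zdGraph n).Adj z.1 b from ⟨hzb, dvd_adj q n hdq hbB'⟩
          exact e.reachable
    intro x y
    exact (reach x).trans (reach y).symm
  · have hcompl := Set.ncard_add_ncard_compl S hSfin (Set.toFinite _)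
    rw [hv, Set.ncard_singleton] at hcompl
    have hdisj : Disjoint A B := by
      rw [Set.disjoint_left]
      intro v hvA hvB
      exact v.2.1 (notboth p q n hcop hvA hvB)
    have hunion := Set.ncard_union_eq hdisj (Set.toFinite _) (Set.toFinite _)
    have hle : (A ∪ B).ncard ≤ (Set.univ : Set (ZeroDivisors n)).ncard :=
      Set.ncard_le_ncard (Set.subset_univ _) (Set.toFinite _)
    rw [hunion, hA, hB, Set.ncard_univ] at hle
    omega

/-- κ(Γ[Z_{p^α q^β}]) = min (p-1) (q-1). -/
theorem stmt4 (p q α β : ℕ) (hp : p.Prime) (hq : q.Prime) (hpq : p ≠ q)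
    (hα : 1 ≤ α) (hβ : 1 ≤ β) :
    vConn (zdGraph (p ^ α * q ^ β)) = min (p - 1) (q - 1) := by
  rcases lt_or_gt_of_ne hpq with h | h
  · rw [min_eq_left (by have := hp.two_le; omega : p - 1 ≤ q - 1)]
    exact key p q α β hp hq h hα hβ
  · rw [min_eq_right (by have := hq.two_le; omega : q - 1 ≤ p - 1)]
    rw [show p ^ α * q ^ β = q ^ β * p ^ α from mul_comm _ _]
    exact key q p β α hq hp h hβ hα
end

section
/- Let n be composite with smallest prime factor q, and suppose Z_n has a nonzero zero divisor. Then the edge connectivity of the zero divisor graph Γ[Z_n] equals q - 1, except when n = p^2 for a prime p, in which case it equals p - 2. -/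
open SimpleGraph

section helpers
variable {n : ℕ}

/-- pigeonhole -/
lemma pigeon {α ι : Type*} [Fintype ι] {E : Set α} (hE : E.Finite)
    (hcard : E.ncard < Fintype.card ι) (F : ι → Set α)
    (hdisj : ∀ i j, i ≠ j → Disjoint (F i) (F j)) :
    ∃ i, ∀ e ∈ F i, e ∉ E := by
  classical
  by_contra h
  push_neg at h
  choose f hf1 hf2 using h
  have hinj : Function.Injective f := by
    intro i j hij
    by_contra hne
    exact Set.disjoint_left.mp (hdisj i j hne) (hf1 i) (hij ▸ hf1 j)
  have h1 : Set.range f ⊆ E := Set.range_subset_iff.2 hf2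
  have h2 := Set.ncard_le_ncard h1 hE
  classical
  have h3 : (Set.range f).ncard = Fintype.card ι := by
    have he : (Set.range f) = ↑(Finset.univ.image f) := by simp
    rw [he, Set.ncard_coe_finset, Finset.card_image_of_injective _ hinj, Finset.card_univ]
  omega

lemma step_reach {V' : Type*} {G : SimpleGraph V'} {E : Set (Sym2 V')} {x y : V'}
    (h : x = y ∨ (G.Adj x y ∧ s(x,y) ∉ E)) : (G.deleteEdges E).Reachable x y := by
  rcases h with rfl | ⟨h1, h2⟩
  · exact Reachable.refl x
  · exact Adj.reachable ((G.deleteEdges_adj).2 ⟨h1, h2⟩)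

lemma isolated_reach {V' : Type*} {G : SimpleGraph V'} {w v : V'}
    (h : ∀ x, ¬ G.Adj w x) (hr : G.Reachable w v) : w = v := by
  obtain ⟨p⟩ := hr
  cases p with
  | nil => rfl
  | cons h' _ => exact absurd h' (h _)

lemma cast_eq_cast_iff (hn : 1 < n) {x y : ℕ} (hx : x < n) (hy : y < n) :
    (x : ZMod n) = y ↔ x = y := by
  haveI : NeZero n := ⟨by omega⟩
  constructor
  · intro h
    have := congrArg ZMod.val h
    rwa [ZMod.val_cast_of_lt hx, ZMod.val_cast_of_lt hy] at this
  · rintro rfl; rfl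

lemma cast_ne_zero_of (hn : 1 < n) {x : ℕ} (h0 : 0 < x) (h1 : x < n) : (x : ZMod n) ≠ 0 := by
  haveI : NeZero n := ⟨by omega⟩
  intro h
  have := congrArg ZMod.val h
  rw [ZMod.val_cast_of_lt h1, ZMod.val_zero] at this
  omega

lemma cast_mul_eq_zero (hn : 1 < n) {x y : ℕ} (h : n ∣ x * y) :
    (x : ZMod n) * (y : ZMod n) = 0 := by
  haveI : NeZero n := ⟨by omega⟩
  rw [← Nat.cast_mul]
  exact (ZMod.natCast_eq_zero_iff _ n).2 h

lemma mem_ZD_of (hn : 1 < n) {x y : ℕ} (hx0 : 0 < x) (hxn : x < n) (hy0 : 0 < y) (hyn : y < n)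
    (h : n ∣ x * y) : (x : ZMod n) ∈ ZeroDivisors n :=
  ⟨cast_ne_zero_of hn hx0 hxn, (y : ZMod n), cast_ne_zero_of hn hy0 hyn, cast_mul_eq_zero hn h⟩

/-- every vertex has gcd with n bigger than 1 -/
lemma one_lt_gcd (hn : 1 < n) {x : ZMod n} (hx : x ∈ ZeroDivisors n) :
    1 < Nat.gcd x.val n := by
  haveI : NeZero n := ⟨by omega⟩
  obtain ⟨hx0, y, hy0, hxy⟩ := hx
  rcases Nat.eq_zero_or_pos (Nat.gcd x.val n) with h | h
  · exact absurd (Nat.eq_zero_of_gcd_eq_zero_right h) (by omega)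
  rcases Nat.lt_or_ge 1 (Nat.gcd x.val n) with h2 | h2
  · exact h2
  exfalso
  have hcop : Nat.Coprime x.val n := by unfold Nat.Coprime; omega
  have hdvd : n ∣ x.val * y.val := by
    have : ((x.val * y.val : ℕ) : ZMod n) = 0 := by
      push_cast
      rw [ZMod.natCast_val, ZMod.natCast_val, ZMod.cast_id, ZMod.cast_id]
      exact hxy
    exact (ZMod.natCast_eq_zero_iff _ n).1 this
  have : n ∣ y.val := (Nat.Coprime.symm hcop).dvd_of_dvd_mul_left hdvd
  have hylt : y.val < n := ZMod.val_lt y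
  have : y.val = 0 := by
    rcases this with ⟨c, hc⟩
    rcases c with _ | c
    · omega
    · nlinarith
  exact hy0 (by rwa [← ZMod.val_eq_zero])
-- vertex-flavored helpers
lemma vert_eq_cast_iff (hn : 1 < n) {x : ℕ} (hx : x < n) (z : ZMod n) :
    (x : ZMod n) = z ↔ x = z.val := by
  haveI : NeZero n := ⟨by omega⟩
  constructor
  · intro h; rw [← h, ZMod.val_cast_of_lt hx]
  · intro h; rw [h]; exact ZMod.natCast_rightInverse z


/-! ### multiples of n/r -/

lemma prime_facts (hn1 : 1 < n) (hnp : ¬ n.Prime) {r : ℕ} (hr : r.Prime) (hrn : r ∣ n) :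
    n.minFac ≤ r ∧ r < n ∧ 0 < n / r ∧ n / r < n ∧ 1 < n / r ∧ r * (n / r) = n := by
  have h0 : 0 < n := by omega
  have hle : r ≤ n := Nat.le_of_dvd h0 hrn
  have hne : r ≠ n := fun h => hnp (h ▸ hr)
  have hmul : r * (n / r) = n := Nat.mul_div_cancel' hrn
  have h2 : 2 ≤ r := hr.two_le
  have hq : n.minFac ≤ r := Nat.minFac_le_of_dvd h2 hrn
  have hpos : 0 < n / r := Nat.div_pos hle (by omega)
  have hlt : n / r < n := Nat.div_lt_self h0 (by omega)
  have h1r : 1 < n / r := by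
    rcases Nat.lt_or_ge 1 (n / r) with h | h
    · exact h
    · exfalso; have : n / r = 1 := by omega
      rw [this, mul_one] at hmul; omega
  exact ⟨hq, by omega, hpos, hlt, h1r, hmul⟩

lemma mulV_lt (hn1 : 1 < n) {r : ℕ} (hrn : r * (n / r) = n) {i : ℕ} (hir : i < r) :
    i * (n / r) < n := by
  have hpos : 0 < n / r := by
    rcases Nat.eq_zero_or_pos (n / r) with h | h
    · rw [h, mul_zero] at hrn; omega
    · exact h
  calc i * (n / r) < r * (n / r) := by
        exact Nat.mul_lt_mul_of_lt_of_le hir (le_refl _) hpos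
    _ = n := hrn

lemma mulV_mem (hn1 : 1 < n) (hnp : ¬ n.Prime) {r : ℕ} (hr : r.Prime) (hrn : r ∣ n)
    {i : ℕ} (hi0 : 0 < i) (hir : i < r) :
    ((i * (n / r) : ℕ) : ZMod n) ∈ ZeroDivisors n := by
  obtain ⟨hq, hrlt, hpos, hlt, h1r, hmul⟩ := prime_facts hn1 hnp hr hrn
  refine mem_ZD_of hn1 (by positivity) (mulV_lt hn1 hmul hir) (by omega) hrlt ?_
  exact ⟨i, by rw [mul_comm (i * (n/r)) r, ← mul_assoc, mul_comm r i, mul_assoc, hmul, mul_comm]⟩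

lemma mulV_inj (hn1 : 1 < n) {r : ℕ} (hrn : r * (n / r) = n) {i j : ℕ}
    (hir : i < r) (hjr : j < r) (h : ((i * (n / r) : ℕ) : ZMod n) = ((j * (n / r) : ℕ) : ZMod n)) :
    i = j := by
  have hpos : 0 < n / r := by
    rcases Nat.eq_zero_or_pos (n / r) with h' | h'
    · rw [h', mul_zero] at hrn; omega
    · exact h'
  have := (cast_eq_cast_iff hn1 (mulV_lt hn1 hrn hir) (mulV_lt hn1 hrn hjr)).1 h
  exact Nat.eq_of_mul_eq_mul_right hpos this

lemma adj_mulV (hn1 : 1 < n) {r : ℕ} (hr : 0 < r) (hrn : r ∣ n) (x : ZMod n)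
    (hx : r ∣ x.val) (i : ℕ) : x * ((i * (n / r) : ℕ) : ZMod n) = 0 := by
  haveI : NeZero n := ⟨by omega⟩
  obtain ⟨t, ht⟩ := hx
  obtain ⟨m, hm⟩ := hrn
  have hdiv : n / r = m := by rw [hm]; exact Nat.mul_div_cancel_left m hr
  have : x = ((x.val : ℕ) : ZMod n) := (ZMod.natCast_rightInverse x).symm
  rw [this, ht, hdiv]
  apply cast_mul_eq_zero hn1
  exact ⟨t * i, by rw [hm]; ring⟩

lemma mulV_mul_mulV (hn1 : 1 < n) {r s : ℕ} (hr : 0 < r) (hs : 0 < s) (hrsn : r * s ∣ n)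
    (i j : ℕ) : ((i * (n / r) : ℕ) : ZMod n) * ((j * (n / s) : ℕ) : ZMod n) = 0 := by
  obtain ⟨c, hc⟩ := hrsn
  have hdr : n / r = s * c := by rw [hc, mul_assoc]; exact Nat.mul_div_cancel_left _ hr
  have hds : n / s = r * c := by
    rw [hc, mul_comm r s, mul_assoc]; exact Nat.mul_div_cancel_left _ hs
  rw [hdr, hds]
  apply cast_mul_eq_zero hn1
  exact ⟨i * j * c, by rw [hc]; ring⟩

lemma mulV_ne_mulV (hn1 : 1 < n) {r s : ℕ} (hr : r.Prime) (hs : s.Prime) (hrs : r ≠ s)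
    (hrsn : r * s ∣ n) {i j : ℕ} (hi0 : 0 < i) (hir : i < r) (hjs : j < s) :
    ((i * (n / r) : ℕ) : ZMod n) ≠ ((j * (n / s) : ℕ) : ZMod n) := by
  intro h
  obtain ⟨c, hc⟩ := hrsn
  have hc0 : 0 < c := by
    rcases Nat.eq_zero_or_pos c with h' | h'
    · rw [h', mul_zero] at hc; omega
    · exact h'
  have hdr : n / r = s * c := by rw [hc, mul_assoc]; exact Nat.mul_div_cancel_left _ hr.pos
  have hds : n / s = r * c := by
    rw [hc, mul_comm r s, mul_assoc]; exact Nat.mul_div_cancel_left _ hs.pos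
  have hrmul : r * (n / r) = n := by rw [hdr, hc]; ring
  have hsmul : s * (n / s) = n := by rw [hds, hc]; ring
  have heq := (cast_eq_cast_iff hn1 (mulV_lt hn1 hrmul hir) (mulV_lt hn1 hsmul hjs)).1 h
  rw [hdr, hds] at heq
  have heq2 : i * s = j * r := by
    have : (i * s) * c = (j * r) * c := by linarith [heq]
    exact Nat.eq_of_mul_eq_mul_right hc0 this
  have hcop : Nat.Coprime r s := (Nat.coprime_primes hr hs).2 hrs
  have hdvd : r ∣ i * s := ⟨j, by rw [heq2]; ring⟩
  have : r ∣ i := hcop.dvd_of_dvd_mul_right hdvd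
  rcases this with ⟨t, ht⟩
  rcases t with _ | t
  · omega
  · nlinarith


/-! ### the family construction -/

lemma families (hn1 : 1 < n) (hnp : ¬ n.Prime) (u v : ↥(ZeroDivisors n)) (huv : u ≠ v) :
    ∃ F : Fin (if n = n.minFac ^ 2 then n.minFac - 2 else n.minFac - 1) →
        Set (Sym2 ↥(ZeroDivisors n)),
      (∀ i j, i ≠ j → Disjoint (F i) (F j)) ∧
      ∀ (E : Set (Sym2 ↥(ZeroDivisors n))) (k), (∀ e ∈ F k, e ∉ E) →
        ((zdGraph n).deleteEdges E).Reachable u v := by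
  classical
  haveI : NeZero n := ⟨by omega⟩
  have hq : n.minFac.Prime := Nat.minFac_prime (by omega)
  have hqn : n.minFac ∣ n := Nat.minFac_dvd n
  set q := n.minFac with hqdef
  have hq2 : 2 ≤ q := hq.two_le
  obtain ⟨hqq', hqltn, hqdivpos, hqdivltn, hqdiv1, hqmul⟩ := prime_facts hn1 hnp hq hqn
  have hdu : 1 < Nat.gcd (u : ZMod n).val n := one_lt_gcd hn1 u.2
  have hdv : 1 < Nat.gcd (v : ZMod n).val n := one_lt_gcd hn1 v.2
  by_cases hAB : ∃ r s : ℕ, r.Prime ∧ s.Prime ∧ r ≠ s ∧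
      r ∣ Nat.gcd (u : ZMod n).val n ∧ s ∣ Nat.gcd (v : ZMod n).val n
  · obtain ⟨r, s, hr, hs, hrs, hru, hsv⟩ := hAB
    have hrn : r ∣ n := hru.trans (Nat.gcd_dvd_right _ _)
    have hsn : s ∣ n := hsv.trans (Nat.gcd_dvd_right _ _)
    have hruv : r ∣ (u : ZMod n).val := dvd_trans hru (Nat.gcd_dvd_left _ _)
    have hsvv : s ∣ (v : ZMod n).val := dvd_trans hsv (Nat.gcd_dvd_left _ _)
    obtain ⟨hqr, hrltn, hrpos, hrltn2, hr1, hrmul⟩ := prime_facts hn1 hnp hr hrn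
    obtain ⟨hqs, hsltn, hspos, hsltn2, hs1, hsmul⟩ := prime_facts hn1 hnp hs hsn
    have hcop : Nat.Coprime r s := (Nat.coprime_primes hr hs).2 hrs
    have hrsn : r * s ∣ n := Nat.Coprime.mul_dvd_of_dvd_of_dvd hcop hrn hsn
    have hnsq : ¬ (n = q ^ 2) := by
      intro h
      have h1 : r = q := (Nat.prime_dvd_prime_iff_eq hr hq).1 (hr.dvd_of_dvd_pow (h ▸ hrn))
      have h2 : s = q := (Nat.prime_dvd_prime_iff_eq hs hq).1 (hs.dvd_of_dvd_pow (h ▸ hsn))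
      exact hrs (h1.trans h2.symm)
    rw [if_neg hnsq]
    have hauxr : ∀ k : Fin (q-1), (k.1+1) < r := fun k => by omega
    have hauxs : ∀ k : Fin (q-1), (k.1+1) < s := fun k => by omega
    set aV : Fin (q-1) → ↥(ZeroDivisors n) := fun k =>
      ⟨(((k.1+1) * (n / r) : ℕ) : ZMod n), mulV_mem hn1 hnp hr hrn (by omega) (hauxr k)⟩
      with haVdef
    set bV : Fin (q-1) → ↥(ZeroDivisors n) := fun k =>
      ⟨(((k.1+1) * (n / s) : ℕ) : ZMod n), mulV_mem hn1 hnp hs hsn (by omega) (hauxs k)⟩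
      with hbVdef
    have hAinj : ∀ k k', aV k = aV k' → k = k' := by
      intro k k' h
      have := mulV_inj hn1 hrmul (hauxr k) (hauxr k') (congrArg Subtype.val h)
      exact Fin.ext (by omega)
    have hBinj : ∀ k k', bV k = bV k' → k = k' := by
      intro k k' h
      have := mulV_inj hn1 hsmul (hauxs k) (hauxs k') (congrArg Subtype.val h)
      exact Fin.ext (by omega)
    have hABne : ∀ k k', aV k ≠ bV k' := by
      intro k k' h
      exact mulV_ne_mulV hn1 hr hs hrs hrsn (by omega) (hauxr k) (hauxs k')
        (congrArg Subtype.val h)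
    have hadjUA : ∀ k, (u : ZMod n) * (aV k : ZMod n) = 0 := fun k =>
      adj_mulV hn1 hr.pos hrn _ hruv _
    have hadjAB : ∀ k k', (aV k : ZMod n) * (bV k' : ZMod n) = 0 := fun k k' =>
      mulV_mul_mulV hn1 hr.pos hs.pos hrsn _ _
    have hadjBV : ∀ k, (bV k : ZMod n) * (v : ZMod n) = 0 := fun k => by
      rw [mul_comm]; exact adj_mulV hn1 hs.pos hsn _ hsvv _
    obtain ⟨σ, hσinj, hkey⟩ : ∃ σ : Fin (q-1) → Fin (q-1), Function.Injective σ ∧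
        ∀ i j, i ≠ j → aV i = v → bV (σ j) = u → False := by
      by_cases hP : (∃ k, aV k = v) ∧ (∃ k, bV k = u)
      · obtain ⟨⟨k₁, hk₁⟩, ⟨k₂, hk₂⟩⟩ := hP
        refine ⟨Equiv.swap k₁ k₂, (Equiv.swap k₁ k₂).injective, ?_⟩
        intro i j hij hai hbj
        have hik1 : i = k₁ := hAinj _ _ (hai.trans hk₁.symm)
        have hjk2 : Equiv.swap k₁ k₂ j = k₂ := hBinj _ _ (hbj.trans hk₂.symm)
        have hjne : j ≠ k₁ := fun h => hij (by rw [hik1, ← h])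
        rw [Equiv.swap_apply_def] at hjk2
        split_ifs at hjk2 with h1 h2
        · exact hjne h1
        · exact hjne (h2.trans hjk2.symm)
        · exact h2 hjk2
      · exact ⟨id, fun a b h => h, fun i j hij hai hbj => hP ⟨⟨i, hai⟩, ⟨j, hbj⟩⟩⟩
    set F : Fin (q-1) → Set (Sym2 ↥(ZeroDivisors n)) := fun k =>
      {s(u, aV k), s(aV k, bV (σ k)), s(bV (σ k), v)} with hFdef
    have hdisj : ∀ i j, i ≠ j → Disjoint (F i) (F j) := by
      intro i j hij
      have hσij : σ i ≠ σ j := fun h => hij (hσinj h)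
      rw [Set.disjoint_left]
      rintro e he hej
      simp only [hFdef, Set.mem_insert_iff, Set.mem_singleton_iff] at he hej
      rcases he with rfl | rfl | rfl <;> rcases hej with h | h | h <;>
        rw [Sym2.eq_iff] at h
      · rcases h with ⟨h1, h2⟩ | ⟨h1, h2⟩
        · exact hij (hAinj _ _ h2)
        · exact hij (hAinj _ _ (h2.trans h1))
      · rcases h with ⟨h1, h2⟩ | ⟨h1, h2⟩
        · exact hABne _ _ h2
        · exact hij (hAinj _ _ h2)
      · rcases h with ⟨h1, h2⟩ | ⟨h1, h2⟩
        · exact hkey i j hij h2 h1.symm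
        · exact huv h1
      · rcases h with ⟨h1, h2⟩ | ⟨h1, h2⟩
        · exact hABne _ _ h2.symm
        · exact hij (hAinj _ _ h1)
      · rcases h with ⟨h1, h2⟩ | ⟨h1, h2⟩
        · exact hij (hAinj _ _ h1)
        · exact hABne _ _ h1
      · rcases h with ⟨h1, h2⟩ | ⟨h1, h2⟩
        · exact hABne _ _ h1
        · exact hσij (hBinj _ _ h2)
      · rcases h with ⟨h1, h2⟩ | ⟨h1, h2⟩
        · exact hkey j i hij.symm h2.symm h1
        · exact huv h2.symm
      · rcases h with ⟨h1, h2⟩ | ⟨h1, h2⟩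
        · exact hABne _ _ h1.symm
        · exact hσij (hBinj _ _ h1)
      · rcases h with ⟨h1, h2⟩ | ⟨h1, h2⟩
        · exact hσij (hBinj _ _ h1)
        · exact hσij (hBinj _ _ (h1.trans h2))
    refine ⟨F, hdisj, ?_⟩
    intro E k hk
    have step1 : ((zdGraph n).deleteEdges E).Reachable u (aV k) := by
      apply step_reach
      by_cases h : u = aV k
      · exact Or.inl h
      · exact Or.inr ⟨⟨h, hadjUA k⟩, hk _ (by simp [hFdef])⟩
    have step2 : ((zdGraph n).deleteEdges E).Reachable (aV k) (bV (σ k)) := by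
      apply step_reach
      exact Or.inr ⟨⟨hABne _ _, hadjAB _ _⟩, hk _ (by simp [hFdef])⟩
    have step3 : ((zdGraph n).deleteEdges E).Reachable (bV (σ k)) v := by
      apply step_reach
      by_cases h : bV (σ k) = v
      · exact Or.inl h
      · exact Or.inr ⟨⟨h, hadjBV _⟩, hk _ (by simp [hFdef])⟩
    exact (step1.trans step2).trans step3
  · -- Sub B : all primes of both gcds coincide
    push_neg at hAB
    set du := Nat.gcd (u : ZMod n).val n with hdudef
    set dv := Nat.gcd (v : ZMod n).val n with hdvdef
    set r := du.minFac with hrdef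
    have hr : r.Prime := Nat.minFac_prime (by omega)
    have hrdu : r ∣ du := Nat.minFac_dvd du
    have hprim_v : ∀ t, t.Prime → t ∣ dv → t = r := by
      intro t ht htdv
      by_contra hne
      exact hAB r t hr ht (fun h => hne h.symm) hrdu htdv
    have hprim_u : ∀ t, t.Prime → t ∣ du → t = r := by
      intro t ht htdu
      have hs' : dv.minFac.Prime := Nat.minFac_prime (by omega)
      have h1 : dv.minFac = r := hprim_v _ hs' (Nat.minFac_dvd dv)
      by_contra hne
      exact hAB t dv.minFac ht hs' (fun h => hne (h.trans h1)) htdu (Nat.minFac_dvd dv)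
    have hrdv : r ∣ dv := by
      have hs' : dv.minFac.Prime := Nat.minFac_prime (by omega)
      have h1 : dv.minFac = r := hprim_v _ hs' (Nat.minFac_dvd dv)
      exact h1 ▸ Nat.minFac_dvd dv
    have hrn : r ∣ n := hrdu.trans (Nat.gcd_dvd_right _ _)
    have hruv : r ∣ (u : ZMod n).val := hrdu.trans (Nat.gcd_dvd_left _ _)
    have hrvv : r ∣ (v : ZMod n).val := hrdv.trans (Nat.gcd_dvd_left _ _)
    obtain ⟨hqr, hrltn, hrpos, hrltn2, hr1, hrmul⟩ := prime_facts hn1 hnp hr hrn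
    have hauxr : ∀ k : Fin (q-1), (k.1+1) < r := fun k => by omega
    set cV : Fin (q-1) → ↥(ZeroDivisors n) := fun k =>
      ⟨(((k.1+1) * (n / r) : ℕ) : ZMod n), mulV_mem hn1 hnp hr hrn (by omega) (hauxr k)⟩
      with hcVdef
    have hCinj : ∀ k k', cV k = cV k' → k = k' := by
      intro k k' h
      have := mulV_inj hn1 hrmul (hauxr k) (hauxr k') (congrArg Subtype.val h)
      exact Fin.ext (by omega)
    have hadjUC : ∀ k, (u : ZMod n) * (cV k : ZMod n) = 0 := fun k =>
      adj_mulV hn1 hr.pos hrn _ hruv _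
    have hadjCV : ∀ k, (cV k : ZMod n) * (v : ZMod n) = 0 := fun k => by
      rw [mul_comm]; exact adj_mulV hn1 hr.pos hrn _ hrvv _
    by_cases hP : (∃ k, cV k = u) ∧ (∃ k, cV k = v)
    · -- both u and v are small multiples of n/r
      obtain ⟨⟨k₁, hk₁⟩, ⟨k₂, hk₂⟩⟩ := hP
      have huval : (u : ZMod n).val = (k₁.1+1) * (n / r) :=
        ((vert_eq_cast_iff hn1 (mulV_lt hn1 hrmul (hauxr k₁)) _).1
          (congrArg Subtype.val hk₁)).symm
      have hvval : (v : ZMod n).val = (k₂.1+1) * (n / r) :=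
        ((vert_eq_cast_iff hn1 (mulV_lt hn1 hrmul (hauxr k₂)) _).1
          (congrArg Subtype.val hk₂)).symm
      have hnrdu : (n / r) ∣ du := by
        rw [hdudef]
        exact Nat.dvd_gcd ⟨k₁.1+1, by rw [huval]; ring⟩ (Nat.div_dvd_of_dvd hrn)
      have hnr_primes : ∀ t, t.Prime → t ∣ n / r → t = r := fun t ht htd =>
        hprim_u t ht (htd.trans hnrdu)
      have hrq : r = q := by
        have hqd : q ∣ r * (n / r) := hrmul.symm ▸ hqn
        rcases (Nat.Prime.dvd_mul hq).1 hqd with h | h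
        · exact ((Nat.prime_dvd_prime_iff_eq hq hr).1 h).symm
        · exact (hnr_primes q hq h).symm
      by_cases hsq : n = q ^ 2
      · -- the exceptional clique case : drop the family through u
        rw [if_pos hsq]
        set emb : Fin (q-2) → Fin (q-1) := fun m =>
          if m.1 < k₁.1 then ⟨m.1, by omega⟩ else ⟨m.1+1, by omega⟩ with hembdef
        have hembv : ∀ m, (emb m).1 = if m.1 < k₁.1 then m.1 else m.1+1 := by
          intro m
          by_cases h : m.1 < k₁.1 <;> simp [hembdef, h]
        have hembne : ∀ m, emb m ≠ k₁ := by
          intro m h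
          have := congrArg Fin.val h
          rw [hembv] at this
          split_ifs at this <;> omega
        have hembinj : ∀ m m', emb m = emb m' → m = m' := by
          intro m m' h
          have := congrArg Fin.val h
          rw [hembv, hembv] at this
          split_ifs at this <;> (exact Fin.ext (by omega))
        have hcu : ∀ m, cV (emb m) ≠ u := by
          intro m h
          exact hembne m (hCinj _ _ (h.trans hk₁.symm))
        set F : Fin (q-2) → Set (Sym2 ↥(ZeroDivisors n)) := fun m =>
          {s(u, cV (emb m)), s(cV (emb m), v)} with hFdef
        have hdisj : ∀ i j, i ≠ j → Disjoint (F i) (F j) := by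
          intro i j hij
          have hembij : emb i ≠ emb j := fun h => hij (hembinj _ _ h)
          rw [Set.disjoint_left]
          rintro e he hej
          simp only [hFdef, Set.mem_insert_iff, Set.mem_singleton_iff] at he hej
          rcases he with rfl | rfl <;> rcases hej with h | h <;> rw [Sym2.eq_iff] at h
          · rcases h with ⟨h1, h2⟩ | ⟨h1, h2⟩
            · exact hembij (hCinj _ _ h2)
            · exact hcu j h1.symm
          · rcases h with ⟨h1, h2⟩ | ⟨h1, h2⟩
            · exact hcu j h1.symm
            · exact huv h1
          · rcases h with ⟨h1, h2⟩ | ⟨h1, h2⟩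
            · exact hcu i h1
            · exact huv h2.symm
          · rcases h with ⟨h1, h2⟩ | ⟨h1, h2⟩
            · exact hembij (hCinj _ _ h1)
            · exact hembij (hCinj _ _ (h1.trans h2))
        refine ⟨F, hdisj, ?_⟩
        intro E k hk
        have step1 : ((zdGraph n).deleteEdges E).Reachable u (cV (emb k)) := by
          apply step_reach
          exact Or.inr ⟨⟨fun h => hcu k h.symm, hadjUC _⟩, hk _ (by simp [hFdef])⟩
        have step2 : ((zdGraph n).deleteEdges E).Reachable (cV (emb k)) v := by
          apply step_reach
          by_cases h : cV (emb k) = v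
          · exact Or.inl h
          · exact Or.inr ⟨⟨h, hadjCV _⟩, hk _ (by simp [hFdef])⟩
        exact step1.trans step2
      · -- not a square : reroute the u-family through the vertex q
        rw [if_neg hsq]
        have hnq2 : n ≠ q * q := by
          intro h; exact hsq (by rw [h]; ring)
        have hwmem : ((q : ℕ) : ZMod n) ∈ ZeroDivisors n := by
          refine mem_ZD_of hn1 (by omega) hqltn hqdivpos hqdivltn ?_
          exact ⟨1, by omega⟩
        set w : ↥(ZeroDivisors n) := ⟨((q : ℕ) : ZMod n), hwmem⟩ with hwdef
        have hwne : ∀ k, w ≠ cV k := by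
          intro k h
          have hval : (q : ℕ) = (k.1+1) * (n / r) :=
            (cast_eq_cast_iff hn1 hqltn (mulV_lt hn1 hrmul (hauxr k))).1
              (congrArg Subtype.val h)
          have hdvd : (n / r) ∣ q := ⟨k.1+1, hval.trans (mul_comm _ _)⟩
          rcases (Nat.Prime.eq_one_or_self_of_dvd hq _ hdvd) with h1 | h1
          · omega
          · exact hnq2 (by rw [← hrmul, h1, hrq])
        have hadjUW : (u : ZMod n) * (w : ZMod n) = 0 := by
          have : (u : ZMod n) = (((u : ZMod n).val : ℕ) : ZMod n) :=
            (ZMod.natCast_rightInverse _).symm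
          rw [this]
          apply cast_mul_eq_zero hn1
          exact ⟨k₁.1+1, by rw [huval, hrq, mul_assoc, Nat.div_mul_cancel hqn]; ring⟩
        have hadjWV : (w : ZMod n) * (v : ZMod n) = 0 := by
          rw [mul_comm]
          have : (v : ZMod n) = (((v : ZMod n).val : ℕ) : ZMod n) :=
            (ZMod.natCast_rightInverse _).symm
          rw [this]
          apply cast_mul_eq_zero hn1
          exact ⟨k₂.1+1, by rw [hvval, hrq, mul_assoc, Nat.div_mul_cancel hqn]; ring⟩
        have hwu : w ≠ u := fun h => hwne k₁ (h.trans hk₁.symm)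
        have hwv : w ≠ v := fun h => hwne k₂ (h.trans hk₂.symm)
        have hcu : ∀ m, m ≠ k₁ → cV m ≠ u := by
          intro m hm h
          exact hm (hCinj _ _ (h.trans hk₁.symm))
        set F : Fin (q-1) → Set (Sym2 ↥(ZeroDivisors n)) := fun k =>
          if k = k₁ then {s(u, w), s(w, v)} else {s(u, cV k), s(cV k, v)} with hFdef
        have hdisj : ∀ i j, i ≠ j → Disjoint (F i) (F j) := by
          intro i j hij
          rw [Set.disjoint_left]
          rintro e he hej
          by_cases hi : i = k₁ <;> by_cases hj : j = k₁
          · exact hij (hi.trans hj.symm)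
          · simp only [hFdef, hi, if_pos rfl, if_neg hj, Set.mem_insert_iff,
              Set.mem_singleton_iff] at he hej
            rcases he with rfl | rfl <;> rcases hej with h | h <;> rw [Sym2.eq_iff] at h
            · rcases h with ⟨h1, h2⟩ | ⟨h1, h2⟩
              · exact hwne j h2
              · exact hwu h2
            · rcases h with ⟨h1, h2⟩ | ⟨h1, h2⟩
              · exact hcu j hj h1.symm
              · exact huv h1
            · rcases h with ⟨h1, h2⟩ | ⟨h1, h2⟩
              · exact hwu h1
              · exact hwne j h1
            · rcases h with ⟨h1, h2⟩ | ⟨h1, h2⟩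
              · exact hwne j h1
              · exact hwv h1
          · simp only [hFdef, hj, if_pos rfl, if_neg hi, Set.mem_insert_iff,
              Set.mem_singleton_iff] at he hej
            rcases he with rfl | rfl <;> rcases hej with h | h <;> rw [Sym2.eq_iff] at h
            · rcases h with ⟨h1, h2⟩ | ⟨h1, h2⟩
              · exact hwne i h2.symm
              · exact hcu i hi h2
            · rcases h with ⟨h1, h2⟩ | ⟨h1, h2⟩
              · exact hwu h1.symm
              · exact huv h1
            · rcases h with ⟨h1, h2⟩ | ⟨h1, h2⟩
              · exact hcu i hi h1
              · exact hwne i h1.symm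
            · rcases h with ⟨h1, h2⟩ | ⟨h1, h2⟩
              · exact hwne i h1.symm
              · exact hwv h2.symm
          · simp only [hFdef, if_neg hi, if_neg hj, Set.mem_insert_iff,
              Set.mem_singleton_iff] at he hej
            rcases he with rfl | rfl <;> rcases hej with h | h <;> rw [Sym2.eq_iff] at h
            · rcases h with ⟨h1, h2⟩ | ⟨h1, h2⟩
              · exact hij (hCinj _ _ h2)
              · exact hcu j hj h1.symm
            · rcases h with ⟨h1, h2⟩ | ⟨h1, h2⟩
              · exact hcu j hj h1.symm
              · exact huv h1
            · rcases h with ⟨h1, h2⟩ | ⟨h1, h2⟩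
              · exact hcu i hi h1
              · exact huv h2.symm
            · rcases h with ⟨h1, h2⟩ | ⟨h1, h2⟩
              · exact hij (hCinj _ _ h1)
              · exact hij (hCinj _ _ (h1.trans h2))
        refine ⟨F, hdisj, ?_⟩
        intro E k hk
        by_cases hkk : k = k₁
        · have hmem1 : s(u, w) ∈ F k := by simp [hFdef, hkk]
          have hmem2 : s(w, v) ∈ F k := by simp [hFdef, hkk]
          have step1 : ((zdGraph n).deleteEdges E).Reachable u w := by
            apply step_reach
            exact Or.inr ⟨⟨fun h => hwu h.symm, hadjUW⟩, hk _ hmem1⟩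
          have step2 : ((zdGraph n).deleteEdges E).Reachable w v := by
            apply step_reach
            exact Or.inr ⟨⟨hwv, hadjWV⟩, hk _ hmem2⟩
          exact step1.trans step2
        · have hmem1 : s(u, cV k) ∈ F k := by simp [hFdef, hkk]
          have hmem2 : s(cV k, v) ∈ F k := by simp [hFdef, hkk]
          have step1 : ((zdGraph n).deleteEdges E).Reachable u (cV k) := by
            apply step_reach
            exact Or.inr ⟨⟨fun h => hcu k hkk h.symm, hadjUC _⟩, hk _ hmem1⟩
          have step2 : ((zdGraph n).deleteEdges E).Reachable (cV k) v := by
            apply step_reach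
            by_cases h : cV k = v
            · exact Or.inl h
            · exact Or.inr ⟨⟨h, hadjCV _⟩, hk _ hmem2⟩
          exact step1.trans step2
    · -- not both : in particular n is not q^2, use the plain fan
      have hnsq : ¬ (n = q ^ 2) := by
        intro hsq
        apply hP
        have hq_dvd : ∀ (x : ↥(ZeroDivisors n)), ∃ k : Fin (q-1), cV k = x := by
          intro x
          have hdx : 1 < Nat.gcd (x : ZMod n).val n := one_lt_gcd hn1 x.2
          have hgd : Nat.gcd (x : ZMod n).val n ∣ q ^ 2 := hsq ▸ Nat.gcd_dvd_right _ _
          have hmf : (Nat.gcd (x : ZMod n).val n).minFac.Prime := Nat.minFac_prime (by omega)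
          have hmfq : (Nat.gcd (x : ZMod n).val n).minFac = q := by
            have h1 := (Nat.minFac_dvd (Nat.gcd (x : ZMod n).val n)).trans hgd
            exact (Nat.prime_dvd_prime_iff_eq hmf hq).1 (hmf.dvd_of_dvd_pow h1)
          have hqx : q ∣ (x : ZMod n).val :=
            (hmfq ▸ Nat.minFac_dvd _).trans (Nat.gcd_dvd_left _ _)
          obtain ⟨j, hj⟩ := hqx
          have hxlt : (x : ZMod n).val < n := ZMod.val_lt _
          have hxne : (x : ZMod n).val ≠ 0 := fun h => x.2.1 (by rwa [← ZMod.val_eq_zero])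
          have hqq : n = q * q := by rw [hsq]; ring
          have hj1 : 1 ≤ j := by
            rcases Nat.eq_zero_or_pos j with rfl | h
            · rw [mul_zero] at hj; exact absurd hj hxne
            · exact h
          have hjq : j < q := by
            have h2 : q * j < q * q := by rw [← hj]; omega
            exact Nat.lt_of_mul_lt_mul_left h2
          have hrq2 : r = q :=
            (Nat.prime_dvd_prime_iff_eq hr hq).1 (hr.dvd_of_dvd_pow (hsq ▸ hrn))
          have hnq : n / q = q := by
            rw [hqq]; exact Nat.mul_div_cancel_left q (by omega)
          refine ⟨⟨j-1, by omega⟩, ?_⟩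
          apply Subtype.ext
          show (((j - 1 + 1) * (n / r) : ℕ) : ZMod n) = (x : ZMod n)
          rw [vert_eq_cast_iff hn1 (mulV_lt hn1 hrmul (by omega))]
          have hjj : j - 1 + 1 = j := by omega
          rw [hrq2, hnq, hj, hjj, mul_comm]
        exact ⟨hq_dvd u, hq_dvd v⟩
      rw [if_neg hnsq]
      set F : Fin (q-1) → Set (Sym2 ↥(ZeroDivisors n)) := fun k =>
        {s(u, cV k), s(cV k, v)} with hFdef
      have hdisj : ∀ i j, i ≠ j → Disjoint (F i) (F j) := by
        intro i j hij
        rw [Set.disjoint_left]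
        rintro e he hej
        simp only [hFdef, Set.mem_insert_iff, Set.mem_singleton_iff] at he hej
        rcases he with rfl | rfl <;> rcases hej with h | h <;> rw [Sym2.eq_iff] at h
        · rcases h with ⟨h1, h2⟩ | ⟨h1, h2⟩
          · exact hij (hCinj _ _ h2)
          · exact hij (hCinj _ _ (h2.trans h1))
        · rcases h with ⟨h1, h2⟩ | ⟨h1, h2⟩
          · exact hP ⟨⟨j, h1.symm⟩, ⟨i, h2⟩⟩
          · exact huv h1
        · rcases h with ⟨h1, h2⟩ | ⟨h1, h2⟩
          · exact hP ⟨⟨i, h1⟩, ⟨j, h2.symm⟩⟩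
          · exact huv h2.symm
        · rcases h with ⟨h1, h2⟩ | ⟨h1, h2⟩
          · exact hij (hCinj _ _ h1)
          · exact hij (hCinj _ _ (h1.trans h2))
      refine ⟨F, hdisj, ?_⟩
      intro E k hk
      have step1 : ((zdGraph n).deleteEdges E).Reachable u (cV k) := by
        apply step_reach
        by_cases h : u = cV k
        · exact Or.inl h
        · exact Or.inr ⟨⟨h, hadjUC _⟩, hk _ (by simp [hFdef])⟩
      have step2 : ((zdGraph n).deleteEdges E).Reachable (cV k) v := by
        apply step_reach
        by_cases h : cV k = v
        · exact Or.inl h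
        · exact Or.inr ⟨⟨h, hadjCV _⟩, hk _ (by simp [hFdef])⟩
      exact step1.trans step2


/-! ### upper bound constructions -/

lemma vertexQ_mem (hn1 : 1 < n) (hnp : ¬ n.Prime) :
    ((n.minFac : ℕ) : ZMod n) ∈ ZeroDivisors n := by
  have hq : n.minFac.Prime := Nat.minFac_prime (by omega)
  obtain ⟨_, hqltn, hqdivpos, hqdivltn, hqdiv1, hqmul⟩ :=
    prime_facts hn1 hnp hq (Nat.minFac_dvd n)
  exact mem_ZD_of hn1 (by have := hq.two_le; omega) hqltn hqdivpos hqdivltn ⟨1, by omega⟩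

lemma adj_q_char (hn1 : 1 < n) (hnp : ¬ n.Prime) (x : ↥(ZeroDivisors n))
    (h : ((n.minFac : ℕ) : ZMod n) * (x : ZMod n) = 0) :
    ∃ t, 1 ≤ t ∧ t < n.minFac ∧ (x : ZMod n).val = t * (n / n.minFac) := by
  haveI : NeZero n := ⟨by omega⟩
  have hq : n.minFac.Prime := Nat.minFac_prime (by omega)
  obtain ⟨_, hqltn, hqdivpos, hqdivltn, hqdiv1, hqmul⟩ :=
    prime_facts hn1 hnp hq (Nat.minFac_dvd n)
  have hdvd : n ∣ n.minFac * (x : ZMod n).val := by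
    have hx : (x : ZMod n) = (((x : ZMod n).val : ℕ) : ZMod n) :=
      (ZMod.natCast_rightInverse _).symm
    rw [hx, ← Nat.cast_mul] at h
    exact (ZMod.natCast_eq_zero_iff _ n).1 h
  have hdvd2 : n / n.minFac ∣ (x : ZMod n).val := by
    have : n.minFac * (n / n.minFac) ∣ n.minFac * (x : ZMod n).val := by
      rw [hqmul]; exact hdvd
    exact (mul_dvd_mul_iff_left (by have := hq.two_le; omega : (n.minFac:ℕ) ≠ 0)).1 this
  obtain ⟨t, ht⟩ := hdvd2
  have hxne : (x : ZMod n).val ≠ 0 := fun h' => x.2.1 (by rwa [← ZMod.val_eq_zero])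
  have hxlt : (x : ZMod n).val < n := ZMod.val_lt _
  have ht1 : 1 ≤ t := by
    rcases Nat.eq_zero_or_pos t with rfl | h'
    · rw [mul_zero] at ht; exact absurd ht hxne
    · exact h'
  have htq : t < n.minFac := by
    have h2 : (n / n.minFac) * t < (n / n.minFac) * n.minFac := by
      rw [← ht, mul_comm (n / n.minFac) n.minFac] at *
      omega
    exact Nat.lt_of_mul_lt_mul_left h2
  exact ⟨t, ht1, htq, by rw [ht, mul_comm]⟩

/-- upper bound construction, generic case -/
lemma upper_general (hn1 : 1 < n) (hnp : ¬ n.Prime) (hnsq : n ≠ n.minFac ^ 2) :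
    ∃ E : Set (Sym2 ↥(ZeroDivisors n)), E ⊆ (zdGraph n).edgeSet ∧ E.Finite ∧
      E.ncard = n.minFac - 1 ∧ ¬ ((zdGraph n).deleteEdges E).Preconnected := by
  classical
  haveI : NeZero n := ⟨by omega⟩
  have hq : n.minFac.Prime := Nat.minFac_prime (by omega)
  have hqn : n.minFac ∣ n := Nat.minFac_dvd n
  set q := n.minFac with hqdef
  have hq2 : 2 ≤ q := hq.two_le
  obtain ⟨_, hqltn, hqdivpos, hqdivltn, hqdiv1, hqmul⟩ := prime_facts hn1 hnp hq hqn
  have hnq2 : n ≠ q * q := fun h => hnsq (by rw [h]; ring)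
  set w₀ : ↥(ZeroDivisors n) := ⟨((q : ℕ) : ZMod n), vertexQ_mem hn1 hnp⟩ with hw₀def
  have hauxq : ∀ k : Fin (q-1), (k.1+1) < q := fun k => by omega
  set cV : Fin (q-1) → ↥(ZeroDivisors n) := fun k =>
    ⟨(((k.1+1) * (n / q) : ℕ) : ZMod n), mulV_mem hn1 hnp hq hqn (by omega) (hauxq k)⟩
    with hcVdef
  have hCinj : ∀ k k', cV k = cV k' → k = k' := by
    intro k k' h
    have := mulV_inj hn1 hqmul (hauxq k) (hauxq k') (congrArg Subtype.val h)
    exact Fin.ext (by omega)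
  have hwne : ∀ k, w₀ ≠ cV k := by
    intro k h
    have hval : (q : ℕ) = (k.1+1) * (n / q) :=
      (cast_eq_cast_iff hn1 hqltn (mulV_lt hn1 hqmul (hauxq k))).1 (congrArg Subtype.val h)
    have hdvd : (n / q) ∣ q := ⟨k.1+1, hval.trans (mul_comm _ _)⟩
    rcases (Nat.Prime.eq_one_or_self_of_dvd hq _ hdvd) with h1 | h1
    · omega
    · exact hnq2 (by rw [← hqmul, h1])
  have hadj : ∀ k, (zdGraph n).Adj w₀ (cV k) := by
    intro k
    refine ⟨fun h => hwne k h, ?_⟩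
    show ((q : ℕ) : ZMod n) * (((k.1+1) * (n / q) : ℕ) : ZMod n) = 0
    apply cast_mul_eq_zero hn1
    exact ⟨k.1+1, by rw [mul_comm (k.1+1) (n / q), ← mul_assoc, hqmul]⟩
  set f : Fin (q-1) → Sym2 ↥(ZeroDivisors n) := fun k => s(w₀, cV k) with hfdef
  have hfinj : Function.Injective f := by
    intro k k' h
    rw [hfdef] at h
    simp only at h
    rw [Sym2.eq_iff] at h
    rcases h with ⟨_, h2⟩ | ⟨h1, h2⟩
    · exact hCinj _ _ h2
    · exact absurd h1 (hwne k')
  refine ⟨Set.range f, ?_, Set.finite_range f, ?_, ?_⟩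
  · rintro e ⟨k, rfl⟩
    exact (zdGraph n).mem_edgeSet.2 (hadj k)
  · have he : (Set.range f) = ↑(Finset.univ.image f) := by simp
    rw [he, Set.ncard_coe_finset, Finset.card_image_of_injective _ hfinj, Finset.card_univ,
      Fintype.card_fin]
  · intro hpre
    have hiso : ∀ x, ¬ ((zdGraph n).deleteEdges (Set.range f)).Adj w₀ x := by
      intro x hx
      rw [SimpleGraph.deleteEdges_adj] at hx
      obtain ⟨hadj', hnotin⟩ := hx
      obtain ⟨t, ht1, htq, htval⟩ := adj_q_char hn1 hnp x hadj'.2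
      apply hnotin
      have hxeq : cV ⟨t-1, by omega⟩ = x := by
        apply Subtype.ext
        show (((t-1+1) * (n / q) : ℕ) : ZMod n) = (x : ZMod n)
        rw [vert_eq_cast_iff hn1 (mulV_lt hn1 hqmul (by omega)), htval]
        congr 1
        omega
      exact ⟨⟨t-1, by omega⟩, by rw [hfdef]; simp only; rw [hxeq]⟩
    have := isolated_reach hiso (hpre w₀ (cV ⟨0, by omega⟩))
    exact hwne _ this

/-- upper bound construction, square case with q ≥ 3 -/
lemma upper_sq (hn1 : 1 < n) (hnp : ¬ n.Prime) (hsq : n = n.minFac ^ 2)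
    (hq3 : 3 ≤ n.minFac) :
    ∃ E : Set (Sym2 ↥(ZeroDivisors n)), E ⊆ (zdGraph n).edgeSet ∧ E.Finite ∧
      E.ncard = n.minFac - 2 ∧ ¬ ((zdGraph n).deleteEdges E).Preconnected := by
  classical
  haveI : NeZero n := ⟨by omega⟩
  have hq : n.minFac.Prime := Nat.minFac_prime (by omega)
  have hqn : n.minFac ∣ n := Nat.minFac_dvd n
  set q := n.minFac with hqdef
  obtain ⟨_, hqltn, hqdivpos, hqdivltn, hqdiv1, hqmul⟩ := prime_facts hn1 hnp hq hqn
  have hqq : n = q * q := by rw [hsq]; ring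
  have hnq : n / q = q := by rw [hqq]; exact Nat.mul_div_cancel_left q (by omega)
  set w₀ : ↥(ZeroDivisors n) := ⟨((q : ℕ) : ZMod n), vertexQ_mem hn1 hnp⟩ with hw₀def
  have hauxq : ∀ k : Fin (q-2), (k.1+2) < q := fun k => by omega
  have hmem : ∀ k : Fin (q-2), (((k.1+2) * (n / q) : ℕ) : ZMod n) ∈ ZeroDivisors n :=
    fun k => mulV_mem hn1 hnp hq hqn (by omega) (hauxq k)
  set cV : Fin (q-2) → ↥(ZeroDivisors n) := fun k =>
    ⟨(((k.1+2) * (n / q) : ℕ) : ZMod n), hmem k⟩ with hcVdef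
  have hCinj : ∀ k k', cV k = cV k' → k = k' := by
    intro k k' h
    have h2 := congrArg Subtype.val h
    have h3 := (cast_eq_cast_iff hn1 (mulV_lt hn1 hqmul (hauxq k))
      (mulV_lt hn1 hqmul (hauxq k'))).1 h2
    have := Nat.eq_of_mul_eq_mul_right hqdivpos h3
    exact Fin.ext (by omega)
  have hwval : (q : ℕ) = 1 * (n / q) := by rw [one_mul, hnq]
  have hwne : ∀ k, w₀ ≠ cV k := by
    intro k h
    have hval : (q : ℕ) = (k.1+2) * (n / q) :=
      (cast_eq_cast_iff hn1 hqltn (mulV_lt hn1 hqmul (hauxq k))).1 (congrArg Subtype.val h)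
    rw [hnq] at hval
    nlinarith [hauxq k]
  have hadj : ∀ k, (zdGraph n).Adj w₀ (cV k) := by
    intro k
    refine ⟨fun h => hwne k h, ?_⟩
    show ((q : ℕ) : ZMod n) * (((k.1+2) * (n / q) : ℕ) : ZMod n) = 0
    apply cast_mul_eq_zero hn1
    exact ⟨k.1+2, by rw [mul_comm (k.1+2) (n / q), ← mul_assoc, hqmul]⟩
  set f : Fin (q-2) → Sym2 ↥(ZeroDivisors n) := fun k => s(w₀, cV k) with hfdef
  have hfinj : Function.Injective f := by
    intro k k' h
    rw [hfdef] at h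
    simp only at h
    rw [Sym2.eq_iff] at h
    rcases h with ⟨_, h2⟩ | ⟨h1, h2⟩
    · exact hCinj _ _ h2
    · exact absurd h1 (hwne k')
  refine ⟨Set.range f, ?_, Set.finite_range f, ?_, ?_⟩
  · rintro e ⟨k, rfl⟩
    exact (zdGraph n).mem_edgeSet.2 (hadj k)
  · have he : (Set.range f) = ↑(Finset.univ.image f) := by simp
    rw [he, Set.ncard_coe_finset, Finset.card_image_of_injective _ hfinj, Finset.card_univ,
      Fintype.card_fin]
  · intro hpre
    have hiso : ∀ x, ¬ ((zdGraph n).deleteEdges (Set.range f)).Adj w₀ x := by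
      intro x hx
      rw [SimpleGraph.deleteEdges_adj] at hx
      obtain ⟨hadj', hnotin⟩ := hx
      obtain ⟨t, ht1, htq, htval⟩ := adj_q_char hn1 hnp x hadj'.2
      have htne1 : t ≠ 1 := by
        intro h
        apply hadj'.1
        apply Subtype.ext
        show (w₀ : ZMod n) = (x : ZMod n)
        show ((q : ℕ) : ZMod n) = (x : ZMod n)
        rw [vert_eq_cast_iff hn1 hqltn, htval, h, one_mul, hnq]
      apply hnotin
      have hxeq : cV ⟨t-2, by omega⟩ = x := by
        apply Subtype.ext
        show (((t-2+2) * (n / q) : ℕ) : ZMod n) = (x : ZMod n)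
        rw [vert_eq_cast_iff hn1 (mulV_lt hn1 hqmul (by omega)), htval]
        congr 1
        omega
      exact ⟨⟨t-2, by omega⟩, by rw [hfdef]; simp only; rw [hxeq]⟩
    have := isolated_reach hiso (hpre w₀ (cV ⟨0, by omega⟩))
    exact hwne _ this

/-- case n = 4 : the graph is a single vertex with no edges -/
lemma four_bot : (zdGraph 4) = ⊥ := by
  have hval : ∀ x : ↥(ZeroDivisors 4), (x : ZMod 4).val = 2 := by
    intro x
    have h1 : 1 < Nat.gcd (x : ZMod 4).val 4 := one_lt_gcd (by omega) x.2
    have h2 : (x : ZMod 4).val < 4 := ZMod.val_lt _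
    have h3 : (x : ZMod 4).val ≠ 0 := fun h => x.2.1 (by rwa [← ZMod.val_eq_zero])
    obtain ⟨t, ht⟩ : ∃ t, (x : ZMod 4).val = t := ⟨_, rfl⟩
    rw [ht] at h1 h2 h3 ⊢
    interval_cases t
    · exact absurd rfl h3
    · exfalso; revert h1; decide
    · rfl
    · exfalso; revert h1; decide
  ext u v
  simp only [SimpleGraph.bot_adj, iff_false]
  intro h
  apply h.1
  apply Subtype.ext
  have hu : (u : ZMod 4) = (((u : ZMod 4).val : ℕ) : ZMod 4) :=
    (ZMod.natCast_rightInverse _).symm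
  have hv : (v : ZMod 4) = (((v : ZMod 4).val : ℕ) : ZMod 4) :=
    (ZMod.natCast_rightInverse _).symm
  show (u : ZMod 4) = (v : ZMod 4)
  rw [hu, hv, hval u, hval v]


lemma one_lt_of_hne (hne : (ZeroDivisors n).Nonempty) : 1 < n := by
  match n, hne with
  | 0, ⟨x, hx0, y, hy0, hxy⟩ =>
    haveI : NoZeroDivisors (ZMod 0) := inferInstanceAs (NoZeroDivisors ℤ)
    rcases mul_eq_zero.1 hxy with h | h
    · exact absurd h hx0
    · exact absurd h hy0
  | 1, ⟨x, hx0, _⟩ => exact absurd (Subsingleton.elim x 0) hx0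
  | (m+2), _ => omega

end helpers

open Classical

/-- for composite n with a nonzero zero divisor and smallest prime factor q,
κₑ(Γ[Z_n]) = q - 1, except κₑ = q - 2 when n = p² for a prime p. -/
theorem stmt8 (n : ℕ) (hn : ¬ n.Prime) (hne : (ZeroDivisors n).Nonempty) :
    eConn (zdGraph n) =
      (if ∃ p : ℕ, p.Prime ∧ n = p ^ 2 then n.minFac - 2 else n.minFac - 1) := by
  classical
  have hn1 : 1 < n := one_lt_of_hne hne
  haveI : NeZero n := ⟨by omega⟩
  have hq : n.minFac.Prime := Nat.minFac_prime (by omega)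
  have hqn : n.minFac ∣ n := Nat.minFac_dvd n
  have hq2 : 2 ≤ n.minFac := hq.two_le
  obtain ⟨_, hqltn, hqdivpos, hqdivltn, hqdiv1, hqmul⟩ := prime_facts hn1 hn hq hqn
  have hcond : (∃ p : ℕ, p.Prime ∧ n = p ^ 2) → n = n.minFac ^ 2 := by
    rintro ⟨p, hp, rfl⟩
    have hne1 : p ^ 2 ≠ 1 := by nlinarith [hp.two_le]
    have h1 : (p^2).minFac ∣ p :=
      (Nat.minFac_prime hne1).dvd_of_dvd_pow (Nat.minFac_dvd _)
    have h2 : (p^2).minFac = p :=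
      (Nat.prime_dvd_prime_iff_eq (Nat.minFac_prime hne1) hp).1 h1
    rw [h2]
  set NN := (if n = n.minFac ^ 2 then n.minFac - 2 else n.minFac - 1) with hNN
  have hgoal : (if ∃ p : ℕ, p.Prime ∧ n = p ^ 2 then n.minFac - 2 else n.minFac - 1) = NN := by
    by_cases hsq : n = n.minFac ^ 2
    · rw [if_pos ⟨n.minFac, hq, hsq⟩, hNN, if_pos hsq]
    · rw [if_neg (fun h => hsq (hcond h)), hNN, if_neg hsq]
  rw [hgoal]
  -- membership of NN
  have hmem : NN ∈ { k | ∃ E : Set (Sym2 ↥(ZeroDivisors n)), E ⊆ (zdGraph n).edgeSet ∧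
      E.Finite ∧ E.ncard = k ∧
      (¬ ((zdGraph n).deleteEdges E).Preconnected ∨ (zdGraph n).deleteEdges E = ⊥) } := by
    by_cases hsq : n = n.minFac ^ 2
    · rcases Nat.lt_or_ge n.minFac 3 with h3 | h3
      · -- n = 4
        have hq2' : n.minFac = 2 := by omega
        have hn4 : n = 4 := by rw [hsq, hq2']; rfl
        refine ⟨∅, Set.empty_subset _, Set.finite_empty, ?_, Or.inr ?_⟩
        · rw [Set.ncard_empty, hNN, if_pos hsq, hq2']
        · rw [SimpleGraph.deleteEdges_empty]
          subst hn4
          exact four_bot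
      · obtain ⟨E, h1, h2, h3', h4⟩ := upper_sq hn1 hn hsq h3
        exact ⟨E, h1, h2, by rw [h3', hNN, if_pos hsq], Or.inl h4⟩
    · obtain ⟨E, h1, h2, h3, h4⟩ := upper_general hn1 hn hsq
      exact ⟨E, h1, h2, by rw [h3, hNN, if_neg hsq], Or.inl h4⟩
  apply le_antisymm
  · exact Nat.sInf_le hmem
  · refine le_csInf ⟨NN, hmem⟩ ?_
    rintro k ⟨E, hEsub, hEfin, hEcard, hdisc⟩
    by_contra hlt
    push_neg at hlt
    have hcard : E.ncard < NN := by omega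
    have hpre : ((zdGraph n).deleteEdges E).Preconnected := by
      intro u v
      by_cases huv : u = v
      · rw [huv]
      · obtain ⟨F, hdisj, hreach⟩ := families hn1 hn u v huv
        obtain ⟨i, hi⟩ := pigeon hEfin (by rwa [Fintype.card_fin]) F hdisj
        exact hreach E i hi
    obtain ⟨u₀, v₀, huv0⟩ : ∃ u₀ v₀ : ↥(ZeroDivisors n), u₀ ≠ v₀ := by
      by_cases hsq : n = n.minFac ^ 2
      · have hq3 : 3 ≤ n.minFac := by
          by_contra h3
          have hq2' : n.minFac = 2 := by omega
          rw [hNN, if_pos hsq, hq2'] at hcard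
          omega
        have hqq : n = n.minFac * n.minFac := hsq.trans (pow_two _)
        have hnq : n / n.minFac = n.minFac := Nat.div_eq_of_eq_mul_left (by omega) hqq
        refine ⟨⟨((n.minFac : ℕ) : ZMod n), vertexQ_mem hn1 hn⟩,
          ⟨((2 * (n / n.minFac) : ℕ) : ZMod n), mulV_mem hn1 hn hq hqn (by omega) (by omega)⟩,
          fun h => ?_⟩
        have := (cast_eq_cast_iff hn1 hqltn
          (mulV_lt hn1 hqmul (by omega : 2 < n.minFac))).1 (congrArg Subtype.val h)
        rw [hnq] at this
        omega
      · refine ⟨⟨((n.minFac : ℕ) : ZMod n), vertexQ_mem hn1 hn⟩,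
          ⟨((1 * (n / n.minFac) : ℕ) : ZMod n), mulV_mem hn1 hn hq hqn (by omega) (by omega)⟩,
          fun h => ?_⟩
        have := (cast_eq_cast_iff hn1 hqltn
          (mulV_lt hn1 hqmul (by omega : 1 < n.minFac))).1 (congrArg Subtype.val h)
        rw [one_mul] at this
        exact hsq (by rw [pow_two]; nth_rewrite 2 [this]; exact hqmul.symm)
    rcases hdisc with h | h
    · exact h hpre
    · have hr := hpre u₀ v₀
      rw [h] at hr
      exact huv0 (isolated_reach (fun x hx => by simp at hx) hr)
end

section
/- For any composite n > 4, the vertex connectivity, edge connectivity, and minimum degree of the zero divisor graph Γ[Z_n] are all equal: κ(Γ[Z_n]) = κ_e(Γ[Z_n]) = δ(Γ[Z_n]). -/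
set_option linter.unusedSectionVars false
set_option linter.unusedVariables false
set_option linter.unnecessarySeqFocus false

namespace ZD9

abbrev VV (n : ℕ) := ↥(ZeroDivisors n)

variable {n : ℕ}

/-- Nonzero multiples of `e` among vertices. -/
def MS (n e : ℕ) : Set (VV n) := {x | e ∣ x.1.val}



lemma exists_avoid {α : Type*} [Finite α] {A B : Set α} (h : B.ncard < A.ncard) :
    ∃ a ∈ A, a ∉ B := by
  by_contra h'
  push_neg at h'
  exact absurd (Set.ncard_le_ncard h' (Set.toFinite B)) (by omega)

lemma ncard_diff_ge {α : Type*} [Finite α] (A B : Set α) :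
    A.ncard - B.ncard ≤ (A \ B).ncard := by
  have hsub : A ⊆ (A \ B) ∪ B := fun a ha => by
    by_cases h : a ∈ B <;> simp [h, ha]
  have h2 := (Set.ncard_le_ncard hsub (Set.toFinite _)).trans (Set.ncard_union_le _ _)
  omega

section NZ
variable [NeZero n]

lemma val_pos (x : VV n) : 0 < x.1.val :=
  Nat.pos_of_ne_zero (fun h => x.2.1 ((ZMod.val_eq_zero _).1 h))

lemma val_lt (x : VV n) : x.1.val < n := ZMod.val_lt _

lemma vinj : Function.Injective (fun x : VV n => x.1.val) :=
  fun a b h => Subtype.ext (ZMod.val_injective n h)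

lemma adj_iff (u v : VV n) :
    (zdGraph n).Adj u v ↔ u ≠ v ∧ n ∣ u.1.val * v.1.val := by
  show (u ≠ v ∧ (u.1 * v.1 = 0)) ↔ _
  have h1 : (u.1 * v.1 : ZMod n) = ((u.1.val * v.1.val : ℕ) : ZMod n) := by
    rw [Nat.cast_mul, ZMod.natCast_val, ZMod.natCast_val, ZMod.cast_id, ZMod.cast_id]
  rw [h1, ZMod.natCast_eq_zero_iff]

lemma adj_of_dvd {u v : VV n} (hne : u ≠ v) {a b : ℕ} (ha : a ∣ u.1.val)
    (hb : b ∣ v.1.val) (hab : n ∣ a * b) : (zdGraph n).Adj u v :=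
  (adj_iff u v).2 ⟨hne, hab.trans (mul_dvd_mul ha hb)⟩

lemma zd_gcd (x : VV n) : 1 < Nat.gcd x.1.val n := by
  have hnpos : 0 < n := Nat.pos_of_ne_zero (NeZero.ne n)
  rcases Nat.lt_or_ge 1 (Nat.gcd x.1.val n) with h | h
  · exact h
  · exfalso
    have hg : Nat.gcd x.1.val n = 1 := by
      have := Nat.gcd_pos_of_pos_right x.1.val hnpos
      omega
    obtain ⟨y, hy0, hxy⟩ := x.2.2
    have hcast : (x.1 * y : ZMod n) = ((x.1.val * y.val : ℕ) : ZMod n) := by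
      rw [Nat.cast_mul, ZMod.natCast_val, ZMod.natCast_val, ZMod.cast_id, ZMod.cast_id]
    rw [hcast, ZMod.natCast_eq_zero_iff] at hxy
    have hcop : Nat.Coprime n x.1.val := Nat.coprime_comm.mp hg
    have hdvd : n ∣ y.val := (Nat.Coprime.dvd_of_dvd_mul_left hcop hxy)
    have hy0' : y.val ≠ 0 := fun h => hy0 ((ZMod.val_eq_zero _).1 h)
    have := Nat.le_of_dvd (Nat.pos_of_ne_zero hy0') hdvd
    have := ZMod.val_lt y
    omega

lemma pool {p : ℕ} (hp : p.Prime) (hpn : p ∣ n)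
    (hpmin : ∀ m, 2 ≤ m → m ∣ n → p ≤ m) (x : VV n) (hx : ¬ p ∣ x.1.val) :
    ∃ e, e ∣ n ∧ 2 ≤ e ∧ p + 1 ≤ n / e ∧ p ∣ e ∧
      (∀ y : VV n, e ∣ y.1.val → y ≠ x → (zdGraph n).Adj x y) := by
  set g := Nat.gcd x.1.val n with hgdef
  have hg1 : 1 < g := zd_gcd x
  have hgx : g ∣ x.1.val := Nat.gcd_dvd_left _ _
  have hgn : g ∣ n := Nat.gcd_dvd_right _ _
  have hgltn : g < n := lt_of_le_of_lt (Nat.le_of_dvd (val_pos x) hgx) (val_lt x)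
  set e := n / g with hedef
  have hne : n = g * e := (Nat.mul_div_cancel' hgn).symm
  have hpg : ¬ p ∣ g := fun h => hx (h.trans hgx)
  have hq : p + 1 ≤ g := by
    have hqp : g.minFac.Prime := Nat.minFac_prime (by omega)
    have h1 : p ≤ g.minFac := hpmin _ hqp.two_le ((Nat.minFac_dvd g).trans hgn)
    have h2 : g.minFac ≠ p := fun h => hpg (h ▸ Nat.minFac_dvd g)
    have h3 : g.minFac ≤ g := Nat.minFac_le (by omega)
    omega
  have he2 : 2 ≤ e := by
    rcases Nat.lt_or_ge e 2 with h | h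
    · interval_cases e <;> omega
    · exact h
  have hnee : n / e = g := Nat.div_div_self hgn (NeZero.ne n)
  refine ⟨e, ⟨g, by rw [hne]; ring⟩, he2, by omega, ?_, ?_⟩
  · rcases (Nat.Prime.dvd_mul hp).1 (hne ▸ hpn) with h | h
    · exact absurd h hpg
    · exact h
  · intro y hy hyx
    exact adj_of_dvd (Ne.symm hyx) hgx hy ⟨1, by rw [hne]; ring⟩

lemma mem_zd [NeZero n] {a e : ℕ} (h1 : 0 < a) (h2 : a < n) (he1 : 0 < e) (he2 : e < n)
    (hdvd : n ∣ a * e) : (a : ZMod n) ∈ ZeroDivisors n := by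
  refine ⟨?_, (e : ZMod n), ?_, ?_⟩
  · rw [Ne, ZMod.natCast_eq_zero_iff]
    exact fun h => absurd (Nat.le_of_dvd h1 h) (by omega)
  · rw [Ne, ZMod.natCast_eq_zero_iff]
    exact fun h => absurd (Nat.le_of_dvd he1 h) (by omega)
  · rw [← Nat.cast_mul, ZMod.natCast_eq_zero_iff]
    exact hdvd

lemma val_mk [NeZero n] {a : ℕ} (h : a < n) (hm : (a : ZMod n) ∈ ZeroDivisors n) :
    (((⟨(a : ZMod n), hm⟩ : VV n)).1.val) = a := ZMod.val_cast_of_lt h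


lemma MS_ncard [NeZero n] {e : ℕ} (he : e ∣ n) (h2 : 2 ≤ e) (hq : 2 ≤ n / e) :
    (MS n e).ncard = n / e - 1 := by
  set q := n / e with hqdef
  have hn : n = e * q := (Nat.mul_div_cancel' he).symm
  have hepos : 0 < e := by omega
  have hqltn : q < n := by nlinarith [Nat.one_le_iff_ne_zero.mpr (by omega : q ≠ 0)]
  have key : (fun x : VV n => x.1.val) '' MS n e = (· * e) '' ↑(Finset.Ioo 0 q) := by
    ext a
    constructor
    · rintro ⟨x, hx, rfl⟩
      obtain ⟨c, hc⟩ := hx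
      refine ⟨c, ?_, by simp only []; rw [hc, mul_comm]⟩
      have h1 := val_pos x
      have h2 := val_lt x
      simp only [Finset.coe_Ioo, Set.mem_Ioo]
      have hc0 : 0 < c := by rcases Nat.eq_zero_or_pos c with h | h; · subst h; omega
                             · exact h
      refine ⟨hc0, ?_⟩
      have : e * c < e * q := by omega
      exact Nat.lt_of_mul_lt_mul_left this
    · rintro ⟨c, hc, rfl⟩
      simp only [Finset.coe_Ioo, Set.mem_Ioo] at hc
      have hlt : c * e < n := by
        calc c * e < q * e := (Nat.mul_lt_mul_right hepos).2 hc.2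
        _ = n := by rw [hn, mul_comm]
      have hpos : 0 < c * e := Nat.mul_pos hc.1 hepos
      have hdvd : n ∣ (c * e) * q := ⟨c, by rw [hn]; ring⟩
      have hm := mem_zd hpos hlt (by omega : 0 < q) hqltn hdvd
      exact ⟨⟨(↑(c*e) : ZMod n), hm⟩, ⟨c, by rw [val_mk hlt hm]; ring⟩, val_mk hlt hm⟩
  have h1 : (MS n e).ncard = ((fun x : VV n => x.1.val) '' MS n e).ncard :=
    (Set.ncard_image_of_injOn (vinj.injOn)).symm
  rw [h1, key, Set.ncard_image_of_injOn, Set.ncard_coe_finset, Nat.card_Ioo]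
  · omega
  · exact fun a _ b _ h => Nat.eq_of_mul_eq_mul_right hepos h


lemma reach_adj {W : Type*} {G : SimpleGraph W} {u v : W} (h : G.Reachable u v)
    (hne : u ≠ v) : ∃ w, G.Adj u w := by
  obtain ⟨w⟩ := h
  cases w with
  | nil => exact absurd rfl hne
  | cons h _ => exact ⟨_, h⟩

-- MAIN vertex lower bound
lemma vlower {p d : ℕ} (hp : p.Prime) (hnpd : n = p * d) (hpd : p ≤ d)
    (hn4 : 4 < n) (hpmin : ∀ m, 2 ≤ m → m ∣ n → p ≤ m)
    (S : Set (VV n)) (hS2 : S.ncard ≤ p - 2) (hS3 : d = p → S.ncard ≤ p - 3) :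
    ((zdGraph n).induce Sᶜ).Preconnected ∧ ¬ ∃ v : VV n, Sᶜ = {v} := by
  have hp2 : 2 ≤ p := hp.two_le
  have hd2 : 2 ≤ d := le_trans hp2 hpd
  have hdn : d ∣ n := ⟨p, by rw [hnpd]; ring⟩
  have hpn : p ∣ n := ⟨d, hnpd⟩
  have hnd : n / d = p := by
    rw [hnpd, mul_comm]; exact Nat.mul_div_cancel_left p (by omega)
  have hnp : n / p = d := by
    rw [hnpd]; exact Nat.mul_div_cancel_left d (by omega)
  have hMcard : (MS n d).ncard = p - 1 := by rw [MS_ncard hdn hd2 (by omega), hnd]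
  have hPcard : (MS n p).ncard = d - 1 := by rw [MS_ncard hpn hp2 (by omega), hnp]
  -- survivor m₀
  obtain ⟨m₀, hm₀M, hm₀S⟩ : ∃ m ∈ MS n d, m ∉ S := exists_avoid (by omega)
  have hm₀c : m₀ ∈ Sᶜ := hm₀S
  -- adjacency between P-elements and M-elements
  have hadjPM : ∀ u v : VV n, u ≠ v → p ∣ u.1.val → d ∣ v.1.val → (zdGraph n).Adj u v :=
    fun u v hne hu hv => adj_of_dvd hne hu hv ⟨1, by rw [hnpd]; ring⟩
  -- every surviving vertex reaches m₀
  have hreach : ∀ u : ↥(Sᶜ), ((zdGraph n).induce Sᶜ).Reachable u ⟨m₀, hm₀c⟩ := by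
    intro u
    have hstep : ∀ w : ↥(Sᶜ), p ∣ w.1.1.val →
        ((zdGraph n).induce Sᶜ).Reachable w ⟨m₀, hm₀c⟩ := by
      intro w hw
      by_cases hwm : w.1 = m₀
      · have heq : w = (⟨m₀, hm₀c⟩ : ↥(Sᶜ)) := Subtype.ext hwm
        rw [heq]
      · exact SimpleGraph.Adj.reachable
          (by exact hadjPM w.1 m₀ hwm hw hm₀M : (zdGraph n).Adj w.1 m₀)
    by_cases hu : p ∣ u.1.1.val
    · exact hstep u hu
    · obtain ⟨e, hen, he2, hpe1, hpe, hadj⟩ := pool hp hpn hpmin u.1 hu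
      have hecard : (MS n e).ncard = n / e - 1 := MS_ncard hen he2 (by omega)
      obtain ⟨y, hy, hyS⟩ : ∃ y ∈ MS n e \ {u.1}, y ∉ S := by
        apply exists_avoid
        have := ncard_diff_ge (MS n e) {u.1}
        rw [Set.ncard_singleton] at this
        omega
      have hyx : y ≠ u.1 := hy.2
      have hadjy : (zdGraph n).Adj u.1 y := hadj y hy.1 hyx
      have hyP : p ∣ y.1.val := hpe.trans hy.1
      exact (SimpleGraph.Adj.reachable
        (by exact hadjy : ((zdGraph n).induce Sᶜ).Adj u ⟨y, hyS⟩)).trans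
        (hstep ⟨y, hyS⟩ hyP)
  constructor
  · intro u v
    exact (hreach u).trans (hreach v).symm
  · rintro ⟨v, hv⟩
    have hPS : (MS n p \ S) ⊆ Sᶜ := fun a ha => ha.2
    have h2 : 2 ≤ (MS n p \ S).ncard := by
      have := ncard_diff_ge (MS n p) S
      by_cases hdp : d = p
      · have := hS3 hdp
        have hp3 : 3 ≤ p := by
          rcases Nat.lt_or_ge p 3 with h | h
          · exfalso; interval_cases p <;> omega
          · exact h
        omega
      · have : p + 1 ≤ d := by omega
        omega
    have := Set.ncard_le_ncard hPS (Set.toFinite _)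
    rw [hv, Set.ncard_singleton] at this
    omega

lemma elower {p d : ℕ} (hp : p.Prime) (hnpd : n = p * d) (hpd : p ≤ d)
    (hn4 : 4 < n) (hpmin : ∀ m, 2 ≤ m → m ∣ n → p ≤ m)
    (E : Set (Sym2 (VV n))) (hE2 : E.ncard ≤ p - 2) (hE3 : d = p → E.ncard ≤ p - 3) :
    ((zdGraph n).deleteEdges E).Preconnected ∧ (zdGraph n).deleteEdges E ≠ ⊥ := by
  classical
  have hp2 : 2 ≤ p := hp.two_le
  have hd2 : 2 ≤ d := le_trans hp2 hpd
  have hdn : d ∣ n := ⟨p, by rw [hnpd]; ring⟩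
  have hpn : p ∣ n := ⟨d, hnpd⟩
  have hnd : n / d = p := by
    rw [hnpd, mul_comm]; exact Nat.mul_div_cancel_left p (by omega)
  have hnp : n / p = d := by
    rw [hnpd]; exact Nat.mul_div_cancel_left d (by omega)
  have hMcard : (MS n d).ncard = p - 1 := by rw [MS_ncard hdn hd2 (by omega), hnd]
  have hPcard : (MS n p).ncard = d - 1 := by rw [MS_ncard hpn hp2 (by omega), hnp]
  by_cases hdp : d = p
  · -- n = p², complete graph case
    subst hdp
    have hp3 : 3 ≤ d := by
      rcases Nat.lt_or_ge d 3 with h | h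
      · interval_cases d <;> omega
      · exact h
    have hE3' : E.ncard ≤ d - 3 := hE3 rfl
    have hall : ∀ x : VV n, d ∣ x.1.val := by
      intro x
      set g := Nat.gcd x.1.val n with hgdef
      have hg1 : 1 < g := zd_gcd x
      have hq : g.minFac.Prime := Nat.minFac_prime (by omega)
      have hqd : g.minFac ∣ d * d := (Nat.minFac_dvd g).trans
        ((Nat.gcd_dvd_right _ _).trans (by rw [hnpd]))
      have : g.minFac = d := by
        rcases (Nat.Prime.dvd_mul hq).1 hqd with h | h <;>
          exact ((Nat.prime_dvd_prime_iff_eq hq hp).1 h)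
      exact (this ▸ Nat.minFac_dvd g).trans (Nat.gcd_dvd_left _ _)
    have hadj : ∀ a b : VV n, a ≠ b → (zdGraph n).Adj a b := by
      intro a b hne
      exact adj_of_dvd hne (hall a) (hall b) ⟨1, by rw [hnpd]; ring⟩
    have hstep : ∀ a b : VV n, a ≠ b → ∃ w, ((zdGraph n).deleteEdges E).Adj a w ∧
        ((zdGraph n).deleteEdges E).Reachable w b := by
      intro a b hab
      by_cases hE : s(a, b) ∈ E
      · -- find a common good neighbor w
        set Bad : Set (VV n) := {w | (s(a,w) ∈ E ∨ s(b,w) ∈ E) ∧ w ≠ a ∧ w ≠ b} with hBad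
        have hBadcard : Bad.ncard ≤ E.ncard - 1 := by
          have h1 : (E \ {s(a,b)}).ncard = E.ncard - 1 :=
            Set.ncard_diff_singleton_of_mem hE
          rw [← h1]
          refine Set.ncard_le_ncard_of_injOn
            (fun w => if s(a,w) ∈ E then s(a,w) else s(b,w)) ?_ ?_ (Set.toFinite _)
          · rintro w ⟨hw, hwa, hwb⟩
            by_cases h : s(a,w) ∈ E
            · simp only [if_pos h]
              refine ⟨h, fun hc => ?_⟩
              rcases Sym2.eq_iff.1 hc with ⟨_, h2⟩ | ⟨h1, _⟩
              · exact hwb h2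
              · exact hab h1
            · simp only [if_neg h]
              have hbw : s(b,w) ∈ E := by tauto
              refine ⟨hbw, fun hc => ?_⟩
              rcases Sym2.eq_iff.1 hc with ⟨h1, _⟩ | ⟨_, h2⟩
              · exact hab h1.symm
              · exact hwa h2
          · intro w hw w' hw' heq
            dsimp only at heq
            by_cases h : s(a,w) ∈ E <;> by_cases h' : s(a,w') ∈ E
            · rw [if_pos h, if_pos h'] at heq
              rcases Sym2.eq_iff.1 heq with ⟨_, h2⟩ | ⟨h1, _⟩
              · exact h2
              · exact absurd h1.symm hw'.2.1
            · rw [if_pos h, if_neg h'] at heq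
              rcases Sym2.eq_iff.1 heq with ⟨h1, _⟩ | ⟨h1, h2⟩
              · exact absurd h1 hab
              · exact absurd h2 hw.2.2
            · rw [if_neg h, if_pos h'] at heq
              rcases Sym2.eq_iff.1 heq with ⟨h1, _⟩ | ⟨h1, h2⟩
              · exact absurd h1.symm hab
              · exact absurd h2 hw.2.1
            · rw [if_neg h, if_neg h'] at heq
              rcases Sym2.eq_iff.1 heq with ⟨_, h2⟩ | ⟨h1, h2⟩
              · exact h2
              · exact absurd h2 hw.2.2
        have hEpos : 1 ≤ E.ncard := by
          have : ({s(a,b)} : Set (Sym2 (VV n))) ⊆ E := by simp [hE]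
          have := Set.ncard_le_ncard this (Set.toFinite E)
          simpa using this
        obtain ⟨w, hwA, hwBad⟩ : ∃ w ∈ (MS n d \ {a, b}), w ∉ Bad := by
          apply exists_avoid
          have h1 := ncard_diff_ge (MS n d) {a, b}
          rw [Set.ncard_pair hab] at h1
          omega
        have hwa : w ≠ a := fun h => hwA.2 (by simp [h])
        have hwb : w ≠ b := fun h => hwA.2 (by simp [h])
        have hgood : s(a,w) ∉ E ∧ s(b,w) ∉ E := by
          by_contra hc
          exact hwBad ⟨by tauto, hwa, hwb⟩
        refine ⟨w, SimpleGraph.deleteEdges_adj.mpr ⟨hadj a w (Ne.symm hwa), hgood.1⟩,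
          SimpleGraph.Adj.reachable (SimpleGraph.deleteEdges_adj.mpr
            ⟨hadj w b hwb, by rw [Sym2.eq_swap]; exact hgood.2⟩)⟩
      · exact ⟨b, SimpleGraph.deleteEdges_adj.mpr ⟨hadj a b hab, hE⟩,
          SimpleGraph.Reachable.refl b⟩
    constructor
    · intro a b
      by_cases hab : a = b
      · rw [hab]
      · obtain ⟨w, hw1, hw2⟩ := hstep a b hab
        exact (SimpleGraph.Adj.reachable hw1).trans hw2
    · -- there exist two distinct vertices, and a surviving edge
      have h1 : (MS n d).Nonempty := Set.nonempty_of_ncard_ne_zero (by omega)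
      obtain ⟨a, ha⟩ := h1
      have h2 : (MS n d \ {a}).Nonempty := by
        apply Set.nonempty_of_ncard_ne_zero
        have := ncard_diff_ge (MS n d) {a}
        rw [Set.ncard_singleton] at this
        omega
      obtain ⟨b, hb⟩ := h2
      have hab : a ≠ b := fun h => hb.2 (by simp [h])
      obtain ⟨w, hw1, _⟩ := hstep a b hab
      intro hbot
      rw [hbot] at hw1
      exact hw1
  · -- general case: hub vertex
    have hpd1 : p + 1 ≤ d := by omega
    have hadjPM : ∀ u v : VV n, u ≠ v → p ∣ u.1.val → d ∣ v.1.val → (zdGraph n).Adj u v :=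
      fun u v hne hu hv => adj_of_dvd hne hu hv ⟨1, by rw [hnpd]; ring⟩
    -- the set P \ M is large
    have hPM : p - 1 ≤ (MS n p \ MS n d).ncard := by
      by_cases hpdvd : p ∣ d
      · have hd2p : 2 * p ≤ d := by
          obtain ⟨k, hk⟩ := hpdvd
          rcases Nat.lt_or_ge k 2 with h | h
          · interval_cases k <;> omega
          · calc 2 * p = p * 2 := by ring
              _ ≤ p * k := Nat.mul_le_mul_left p h
              _ = d := hk.symm
        have := ncard_diff_ge (MS n p) (MS n d)
        omega
      · have hsub : MS n p ⊆ MS n p \ MS n d := by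
          intro x hx
          refine ⟨hx, fun hxd => ?_⟩
          obtain ⟨c, hc⟩ := hxd
          have hpc : p ∣ c := by
            rcases (Nat.Prime.dvd_mul hp).1 (show p ∣ d * c from hc ▸ hx) with h | h
            · exact absurd h hpdvd
            · exact h
          have hc0 : 0 < c := by
            rcases Nat.eq_zero_or_pos c with h | h
            · exfalso; have h2 := val_pos x; rw [h, mul_zero] at hc; omega
            · exact h
          have hple : p ≤ c := Nat.le_of_dvd hc0 hpc
          have hdp2 : d * p ≤ d * c := Nat.mul_le_mul_left d hple
          have hvlt := val_lt x
          have hn' : n = d * p := by rw [hnpd]; ring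
          omega
        have := Set.ncard_le_ncard hsub (Set.toFinite _)
        omega
    -- find the hub u₀
    obtain ⟨u₀, hu₀PM, hu₀E⟩ : ∃ u₀ ∈ MS n p \ MS n d, ∀ m ∈ MS n d, s(u₀, m) ∉ E := by
      by_contra hc
      push_neg at hc
      have hmem : (MS n p \ MS n d).ncard ≤ E.ncard := by
        refine Set.ncard_le_ncard_of_injOn (fun x =>
          if h : ∃ m ∈ MS n d, s(x, m) ∈ E then s(x, h.choose) else s(x, x))
          ?_ ?_ (Set.toFinite _)
        · intro x hx
          have hex : ∃ m ∈ MS n d, s(x, m) ∈ E := hc x hx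
          simp only [dif_pos hex]
          exact hex.choose_spec.2
        · intro x hx x' hx' heq
          have hex : ∃ m ∈ MS n d, s(x, m) ∈ E := hc x hx
          have hex' : ∃ m ∈ MS n d, s(x', m) ∈ E := hc x' hx'
          simp only [dif_pos hex, dif_pos hex'] at heq
          rcases Sym2.eq_iff.1 heq with ⟨h1, _⟩ | ⟨h1, h2⟩
          · exact h1
          · exact absurd (h1 ▸ hex'.choose_spec.1) hx.2
      omega
    have hu₀P : p ∣ u₀.1.val := hu₀PM.1
    have hu₀M : u₀ ∉ MS n d := hu₀PM.2
    -- reach from M-vertices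
    have reachM : ∀ m ∈ MS n d, ((zdGraph n).deleteEdges E).Reachable m u₀ := by
      intro m hm
      have hne : u₀ ≠ m := fun h => hu₀M (h ▸ hm)
      exact SimpleGraph.Adj.reachable (SimpleGraph.deleteEdges_adj.mpr
        ⟨(hadjPM u₀ m hne hu₀P hm).symm, by rw [Sym2.eq_swap]; exact hu₀E m hm⟩)
    -- reach from P-vertices
    have reachP : ∀ x : VV n, p ∣ x.1.val → ((zdGraph n).deleteEdges E).Reachable x u₀ := by
      intro x hx
      by_cases hxM : x ∈ MS n d
      · exact reachM x hxM
      · by_cases hxu : x = u₀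
        · rw [hxu]
        · obtain ⟨m, hm, hmE⟩ : ∃ m ∈ MS n d, s(x, m) ∉ E := by
            by_contra hc
            push_neg at hc
            have : (MS n d).ncard ≤ E.ncard := by
              refine Set.ncard_le_ncard_of_injOn (fun m => s(x, m))
                (fun m hm => hc m hm) ?_ (Set.toFinite _)
              intro m hm m' hm' heq
              rcases Sym2.eq_iff.1 heq with ⟨_, h2⟩ | ⟨h1, _⟩
              · exact h2
              · exact absurd (h1 ▸ hm') hxM
            omega
          have hne : x ≠ m := fun h => hxM (h ▸ hm)
          exact (SimpleGraph.Adj.reachable (SimpleGraph.deleteEdges_adj.mpr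
            ⟨hadjPM x m hne hx hm, hmE⟩)).trans (reachM m hm)
    -- reach from all vertices
    have reach : ∀ x : VV n, ((zdGraph n).deleteEdges E).Reachable x u₀ := by
      intro x
      by_cases hx : p ∣ x.1.val
      · exact reachP x hx
      · obtain ⟨e, hen, he2, hpe1, hpe, hadj⟩ := pool hp hpn hpmin x hx
        have hecard : (MS n e).ncard = n / e - 1 := MS_ncard hen he2 (by omega)
        obtain ⟨y, hy, hyE⟩ : ∃ y ∈ MS n e \ {x}, s(x, y) ∉ E := by
          by_contra hc
          push_neg at hc
          have : (MS n e \ {x}).ncard ≤ E.ncard := by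
            refine Set.ncard_le_ncard_of_injOn (fun y => s(x, y))
              (fun y hy => hc y hy) ?_ (Set.toFinite _)
            intro y hy y' hy' heq
            rcases Sym2.eq_iff.1 heq with ⟨_, h2⟩ | ⟨h1, _⟩
            · exact h2
            · exact absurd h1.symm hy'.2
          have h1 := ncard_diff_ge (MS n e) {x}
          rw [Set.ncard_singleton] at h1
          omega
        have hyx : y ≠ x := hy.2
        exact (SimpleGraph.Adj.reachable (SimpleGraph.deleteEdges_adj.mpr
          ⟨hadj y hy.1 hyx, hyE⟩)).trans (reachP y (hpe.trans hy.1))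
    refine ⟨fun a b => (reach a).trans (reach b).symm, ?_⟩
    have hM1 : (MS n d).Nonempty := Set.nonempty_of_ncard_ne_zero (by omega)
    obtain ⟨m, hm⟩ := hM1
    have hne : u₀ ≠ m := fun h => hu₀M (h ▸ hm)
    intro hbot
    have : ((zdGraph n).deleteEdges E).Adj u₀ m :=
      SimpleGraph.deleteEdges_adj.mpr ⟨hadjPM u₀ m hne hu₀P hm, hu₀E m hm⟩
    rw [hbot] at this
    exact this

end NZ
end ZD9

/-- for composite n > 4, κ = κₑ = δ for Γ[Z_n]. -/
theorem stmt9 (n : ℕ) (hn : ¬ n.Prime) (hn4 : 4 < n) :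
    vConn (zdGraph n) = eConn (zdGraph n) ∧ eConn (zdGraph n) = minDeg (zdGraph n) := by
  classical
  haveI : NeZero n := ⟨by omega⟩
  open ZD9 in
  -- basic number theory setup
  set p := n.minFac with hpdef
  have hp : p.Prime := Nat.minFac_prime (by omega)
  have hpn : p ∣ n := Nat.minFac_dvd n
  have hpmin : ∀ m, 2 ≤ m → m ∣ n → p ≤ m := fun m hm hd => Nat.minFac_le_of_dvd hm hd
  set d := n / p with hddef
  have hnpd : n = p * d := (Nat.mul_div_cancel' hpn).symm
  have hp2 : 2 ≤ p := hp.two_le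
  have hd2 : 2 ≤ d := by
    rcases Nat.lt_or_ge d 2 with h | h
    · exfalso
      interval_cases d
      · rw [mul_zero] at hnpd; omega
      · rw [mul_one] at hnpd; exact hn (hnpd ▸ hp)
    · exact h
  have hdn : d ∣ n := ⟨p, by rw [hnpd]; ring⟩
  have hpd : p ≤ d := hpmin d hd2 hdn
  have hd3 : 3 ≤ d := by
    rcases Nat.lt_or_ge d 3 with h | h
    · exfalso; interval_cases d <;> omega
    · exact h
  have hnd : n / d = p := by
    rw [hnpd, mul_comm]; exact Nat.mul_div_cancel_left p (by omega)
  have hMcard : (MS n d).ncard = p - 1 := by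
    rw [MS_ncard hdn hd2 (by omega), hnd]
  have hPcard : (MS n p).ncard = d - 1 := by
    rw [MS_ncard hpn hp2 (by rw [← hddef]; omega), ← hddef]
  have hpltn : p < n := by
    calc p < p * 2 := by omega
    _ ≤ p * d := Nat.mul_le_mul_left p hd2
    _ = n := hnpd.symm
  have hdltn : d < n := by
    calc d < 2 * d := by omega
    _ ≤ p * d := Nat.mul_le_mul_right d hp2
    _ = n := hnpd.symm
  have hx₁mem : ((p : ℕ) : ZMod n) ∈ ZeroDivisors n :=
    mem_zd (by omega) hpltn (by omega) hdltn ⟨1, by rw [hnpd]; ring⟩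
  set x₁ : VV n := ⟨((p : ℕ) : ZMod n), hx₁mem⟩ with hx₁def
  have hx₁val : x₁.1.val = p := val_mk hpltn hx₁mem
  have hnbx₁ : (zdGraph n).neighborSet x₁ ⊆ MS n d \ {x₁} := by
    intro y hy
    rw [SimpleGraph.mem_neighborSet, adj_iff] at hy
    obtain ⟨hne, hdvd⟩ := hy
    rw [hx₁val] at hdvd
    have hdvd2 : p * d ∣ p * y.1.val := by rw [← hnpd]; exact hdvd
    have hdy : d ∣ y.1.val := (mul_dvd_mul_iff_left (show p ≠ 0 by omega)).1 hdvd2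
    exact ⟨hdy, fun h => hne (by rw [h])⟩
  set δ := minDeg (zdGraph n) with hδdef
  have hδle : δ ≤ ((zdGraph n).neighborSet x₁).ncard := Nat.sInf_le ⟨x₁, rfl⟩
  have hδle1 : δ ≤ p - 1 := by
    have h1 := Set.ncard_le_ncard hnbx₁ (Set.toFinite _)
    have h2 := Set.ncard_le_ncard (Set.diff_subset (s := MS n d) (t := {x₁}))
      (Set.toFinite _)
    omega
  have hδle2 : d = p → δ ≤ p - 2 := by
    intro hdp
    have hx₁M : x₁ ∈ MS n d := by
      show d ∣ x₁.1.val
      rw [hx₁val, hdp]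
    have h3 : (MS n d \ {x₁}).ncard = (MS n d).ncard - 1 :=
      Set.ncard_diff_singleton_of_mem hx₁M
    have h1 := Set.ncard_le_ncard hnbx₁ (Set.toFinite _)
    omega
  obtain ⟨v₀, hv₀⟩ : ∃ v : VV n, ((zdGraph n).neighborSet v).ncard = δ :=
    Nat.sInf_mem (⟨_, x₁, rfl⟩ :
      {k | ∃ v : VV n, ((zdGraph n).neighborSet v).ncard = k}.Nonempty)
  have hsecond : ∀ v : VV n, ∃ w : VV n, w ≠ v := by
    intro v
    obtain ⟨w, hw, hwv⟩ : ∃ w ∈ MS n p, w ∉ ({v} : Set (VV n)) :=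
      exists_avoid (by rw [hPcard, Set.ncard_singleton]; omega)
    exact ⟨w, fun h => hwv (by simp [h])⟩
  -- vConn ≤ δ
  have hvmem : δ ∈ {k | ∃ S : Set (VV n), S.Finite ∧ S.ncard = k ∧
      (¬ ((zdGraph n).induce Sᶜ).Preconnected ∨ ∃ v : VV n, Sᶜ = {v})} := by
    refine ⟨(zdGraph n).neighborSet v₀, Set.toFinite _, hv₀, ?_⟩
    by_cases hsing : ((zdGraph n).neighborSet v₀)ᶜ = {v₀}
    · exact Or.inr ⟨v₀, hsing⟩
    · left
      have hv₀c : v₀ ∈ ((zdGraph n).neighborSet v₀)ᶜ :=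
        fun h => (zdGraph n).irrefl h
      obtain ⟨w, hwc, hwv⟩ : ∃ w ∈ ((zdGraph n).neighborSet v₀)ᶜ, w ≠ v₀ := by
        by_contra hc
        push_neg at hc
        exact hsing (Set.eq_singleton_iff_unique_mem.2 ⟨hv₀c, hc⟩)
      intro hpre
      have hr := hpre ⟨v₀, hv₀c⟩ ⟨w, hwc⟩
      have hne2 : (⟨v₀, hv₀c⟩ : ↥(((zdGraph n).neighborSet v₀)ᶜ)) ≠ ⟨w, hwc⟩ :=
        fun h => hwv (congrArg Subtype.val h).symm
      obtain ⟨z, hz⟩ := reach_adj hr hne2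
      exact z.2 hz
  -- eConn ≤ δ
  have hEcard : ((zdGraph n).incidenceSet v₀).ncard = δ := by
    rw [← hv₀]
    have himg : (fun y => s(v₀, y)) '' ((zdGraph n).neighborSet v₀) =
        (zdGraph n).incidenceSet v₀ := by
      ext e
      constructor
      · rintro ⟨y, hy, rfl⟩
        exact ⟨(zdGraph n).mem_edgeSet.2 hy, Sym2.mem_mk_left _ _⟩
      · rintro ⟨hedge, hmem⟩
        induction e with
        | _ x y =>
          rcases Sym2.mem_iff.1 hmem with h | h
          · subst h
            exact ⟨y, (zdGraph n).mem_edgeSet.1 hedge, rfl⟩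
          · subst h
            exact ⟨x, ((zdGraph n).mem_edgeSet.1 hedge).symm, Sym2.eq_swap⟩
    rw [← himg]
    apply Set.ncard_image_of_injOn
    intro y hy y' hy' heq
    rcases Sym2.eq_iff.1 heq with ⟨_, h2⟩ | ⟨h1, _⟩
    · exact h2
    · exact absurd (h1 ▸ hy') ((zdGraph n).irrefl)
  have hemem : δ ∈ {k | ∃ E : Set (Sym2 (VV n)), E ⊆ (zdGraph n).edgeSet ∧ E.Finite ∧
      E.ncard = k ∧ (¬ ((zdGraph n).deleteEdges E).Preconnected ∨
        (zdGraph n).deleteEdges E = ⊥)} := by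
    refine ⟨(zdGraph n).incidenceSet v₀, (zdGraph n).incidenceSet_subset v₀,
      Set.toFinite _, hEcard, Or.inl ?_⟩
    intro hpre
    obtain ⟨w, hwv⟩ := hsecond v₀
    have hr := hpre v₀ w
    obtain ⟨z, hz⟩ := reach_adj hr (Ne.symm hwv)
    rw [SimpleGraph.deleteEdges_adj] at hz
    exact hz.2 ⟨(zdGraph n).mem_edgeSet.2 hz.1, Sym2.mem_mk_left _ _⟩
  -- lower bounds
  have hvge : δ ≤ vConn (zdGraph n) := by
    apply le_csInf ⟨δ, hvmem⟩
    rintro k ⟨S, hSfin, hScard, hSdis⟩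
    by_contra hlt
    push_neg at hlt
    have h2 : S.ncard ≤ p - 2 := by omega
    have h3 : d = p → S.ncard ≤ p - 3 := fun hdp => by have := hδle2 hdp; omega
    obtain ⟨hpre, hnsing⟩ := vlower hp hnpd hpd hn4 hpmin S h2 h3
    rcases hSdis with h | h
    · exact h hpre
    · exact hnsing h
  have hege : δ ≤ eConn (zdGraph n) := by
    apply le_csInf ⟨δ, hemem⟩
    rintro k ⟨E, hEsub, hEfin, hEcard', hEdis⟩
    by_contra hlt
    push_neg at hlt
    have h2 : E.ncard ≤ p - 2 := by omega
    have h3 : d = p → E.ncard ≤ p - 3 := fun hdp => by have := hδle2 hdp; omega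
    obtain ⟨hpre, hnbot⟩ := elower hp hnpd hpd hn4 hpmin E h2 h3
    rcases hEdis with h | h
    · exact h hpre
    · exact hnbot h
  have hv : vConn (zdGraph n) = δ := le_antisymm (Nat.sInf_le hvmem) hvge
  have he : eConn (zdGraph n) = δ := le_antisymm (Nat.sInf_le hemem) hege
  exact ⟨by rw [hv, he], he⟩
end

section
/- For a prime p and n ≥ 3, the minimum degree of the zero divisor graph Γ[Z_{p^n}] equals p - 1, and it is attained at every vertex of the form kp with p ∤ k (i.e., elements divisible by p but not p^2). -/
lemma zd_mul_eq_zero (m : ℕ) [NeZero m] (x y : ZMod m) :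
    x * y = 0 ↔ m ∣ x.val * y.val := by
  rw [← ZMod.val_eq_zero, ZMod.val_mul, Nat.dvd_iff_mod_eq_zero]

lemma zd_ne_zero (m : ℕ) [NeZero m] (x : ZMod m) : x ≠ 0 ↔ x.val ≠ 0 := by
  rw [Ne, Ne, ← ZMod.val_eq_zero]

lemma mem_zd_iff_s10 (p n : ℕ) (hp : p.Prime) (hn : 2 ≤ n) (x : ZMod (p ^ n)) :
    haveI : NeZero (p ^ n) := ⟨pow_ne_zero n hp.pos.ne'⟩
    x ∈ ZeroDivisors (p ^ n) ↔ x.val ≠ 0 ∧ p ∣ x.val := by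
  haveI : NeZero (p ^ n) := ⟨pow_ne_zero n hp.pos.ne'⟩
  constructor
  · rintro ⟨hx0, y, hy0, hxy⟩
    refine ⟨(zd_ne_zero _ x).mp hx0, ?_⟩
    by_contra hpd
    have hcop : (p ^ n).Coprime x.val := Nat.Coprime.pow_left _ (hp.coprime_iff_not_dvd.mpr hpd)
    have hdvd : p ^ n ∣ y.val := hcop.dvd_of_dvd_mul_left ((zd_mul_eq_zero _ x y).mp hxy)
    exact ((zd_ne_zero _ y).mp hy0) (Nat.eq_zero_of_dvd_of_lt hdvd (ZMod.val_lt y))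
  · rintro ⟨hv, t, ht⟩
    have hlt : p ^ (n - 1) < p ^ n := Nat.pow_lt_pow_right hp.one_lt (by omega)
    have hval : ((p ^ (n - 1) : ℕ) : ZMod (p ^ n)).val = p ^ (n - 1) := by
      rw [ZMod.val_natCast, Nat.mod_eq_of_lt hlt]
    refine ⟨(zd_ne_zero _ x).mpr hv, ((p ^ (n - 1) : ℕ) : ZMod (p ^ n)), ?_, ?_⟩
    · rw [zd_ne_zero, hval]
      exact (pow_pos hp.pos _).ne'
    · rw [zd_mul_eq_zero, hval, ht]
      refine ⟨t, ?_⟩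
      have h1 : (n - 1) + 1 = n := by omega
      calc p * t * p ^ (n - 1) = p ^ (n - 1) * p * t := by ring
        _ = p ^ n * t := by rw [← pow_succ, h1]

lemma count_lemma (p n a : ℕ) (hp : p.Prime) (ha : a ≤ n) :
    haveI : NeZero (p ^ n) := ⟨pow_ne_zero n hp.pos.ne'⟩
    {x : ZMod (p ^ n) | x.val ≠ 0 ∧ p ^ a ∣ x.val}.ncard = p ^ (n - a) - 1 := by
  haveI : NeZero (p ^ n) := ⟨pow_ne_zero n hp.pos.ne'⟩
  have hpa : 0 < p ^ a := pow_pos hp.pos _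
  have hsplit : p ^ (n - a) * p ^ a = p ^ n := by
    rw [← pow_add]; congr 1; omega
  have hset : {x : ZMod (p ^ n) | x.val ≠ 0 ∧ p ^ a ∣ x.val}
      = ↑((Finset.Ico 1 (p ^ (n - a))).image (fun j : ℕ => ((j * p ^ a : ℕ) : ZMod (p ^ n)))) := by
    ext x
    simp only [Finset.coe_image, Finset.coe_Ico, Set.mem_image, Set.mem_Ico, Set.mem_setOf_eq]
    constructor
    · rintro ⟨hx0, t, ht⟩
      refine ⟨t, ⟨?_, ?_⟩, ?_⟩
      · rcases Nat.eq_zero_or_pos t with rfl | h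
        · simp [ht] at hx0
        · exact h
      · have : p ^ a * t < p ^ (n - a) * p ^ a := by rw [hsplit, ← ht]; exact ZMod.val_lt x
        by_contra hle
        push_neg at hle
        nlinarith
      · rw [mul_comm, ← ht]
        exact ZMod.natCast_rightInverse x
    · rintro ⟨j, ⟨hj1, hj2⟩, rfl⟩
      have hlt : j * p ^ a < p ^ n := by
        rw [← hsplit]; exact Nat.mul_lt_mul_of_lt_of_le hj2 le_rfl hpa
      rw [ZMod.val_natCast, Nat.mod_eq_of_lt hlt]
      exact ⟨Nat.mul_ne_zero (by omega) hpa.ne', ⟨j, mul_comm _ _⟩⟩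
  rw [hset, Set.ncard_coe_finset, Finset.card_image_of_injOn, Nat.card_Ico]
  intro j hj j' hj' hjj
  simp only [Finset.coe_Ico, Set.mem_Ico] at hj hj'
  have e1 : j * p ^ a < p ^ n := by
    rw [← hsplit]; exact Nat.mul_lt_mul_of_lt_of_le hj.2 le_rfl hpa
  have e2 : j' * p ^ a < p ^ n := by
    rw [← hsplit]; exact Nat.mul_lt_mul_of_lt_of_le hj'.2 le_rfl hpa
  have := congrArg ZMod.val hjj
  rw [ZMod.val_natCast, ZMod.val_natCast, Nat.mod_eq_of_lt e1, Nat.mod_eq_of_lt e2] at this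
  exact Nat.eq_of_mul_eq_mul_right hpa this

lemma nbhd_image (m : ℕ) (u : ZeroDivisors m) :
    Subtype.val '' ((zdGraph m).neighborSet u) =
      {x : ZMod m | x ∈ ZeroDivisors m ∧ x ≠ ↑u ∧ (↑u : ZMod m) * x = 0} := by
  ext x
  simp only [Set.mem_image, SimpleGraph.mem_neighborSet, Set.mem_setOf_eq]
  constructor
  · rintro ⟨w, hadj, rfl⟩
    obtain ⟨hne, hmul⟩ : u ≠ w ∧ (↑u : ZMod m) * ↑w = 0 := hadj
    exact ⟨w.2, fun h => hne (Subtype.ext h.symm), hmul⟩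
  · rintro ⟨hx, hne, hmul⟩
    exact ⟨⟨x, hx⟩, ⟨fun h => hne (congrArg Subtype.val h).symm, hmul⟩, rfl⟩

lemma ncard_nbhd (m : ℕ) (u : ZeroDivisors m) :
    ((zdGraph m).neighborSet u).ncard =
      {x : ZMod m | x ∈ ZeroDivisors m ∧ x ≠ ↑u ∧ (↑u : ZMod m) * x = 0}.ncard := by
  rw [← nbhd_image, Set.ncard_image_of_injective _ Subtype.val_injective]

lemma pn_dvd_mul (p n c d : ℕ) (hcd : c + d = n) {A B : ℕ}
    (hA : p ^ c ∣ A) (hB : p ^ d ∣ B) : p ^ n ∣ A * B := by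
  obtain ⟨a, rfl⟩ := hA
  obtain ⟨b, rfl⟩ := hB
  exact ⟨a * b, by rw [← hcd, pow_add]; ring⟩

lemma degree_eq (p n : ℕ) (hp : p.Prime) (hn : 3 ≤ n) (v : ZeroDivisors (p ^ n))
    (h1 : p ∣ (v : ZMod (p ^ n)).val) (h2 : ¬ p ^ 2 ∣ (v : ZMod (p ^ n)).val) :
    ((zdGraph (p ^ n)).neighborSet v).ncard = p - 1 := by
  haveI : NeZero (p ^ n) := ⟨pow_ne_zero n hp.pos.ne'⟩
  obtain ⟨k, hkeq⟩ := h1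
  have hk : ¬ p ∣ k := fun ⟨c, hc⟩ => h2 ⟨c, by rw [hkeq, hc, pow_two]; ring⟩
  have hpn : p ^ n = p * p ^ (n - 1) := by
    rw [← pow_succ']; congr 1; omega
  have hset : {x : ZMod (p ^ n) | x ∈ ZeroDivisors (p ^ n) ∧ x ≠ ↑v ∧ (↑v : ZMod (p ^ n)) * x = 0}
      = {x : ZMod (p ^ n) | x.val ≠ 0 ∧ p ^ (n - 1) ∣ x.val} := by
    ext x
    simp only [Set.mem_setOf_eq]
    constructor
    · rintro ⟨hx, -, hmul⟩
      refine ⟨((mem_zd_iff_s10 p n hp (by omega) x).mp hx).1, ?_⟩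
      have hd : p * p ^ (n - 1) ∣ p * (k * x.val) := by
        rw [← hpn, ← mul_assoc, ← hkeq]
        exact (zd_mul_eq_zero _ _ _).mp hmul
      have h3 : p ^ (n - 1) ∣ k * x.val := (Nat.mul_dvd_mul_iff_left hp.pos).mp hd
      exact (Nat.Coprime.pow_left (n - 1) (hp.coprime_iff_not_dvd.mpr hk)).dvd_of_dvd_mul_left h3
    · rintro ⟨hx0, b, hb⟩
      refine ⟨(mem_zd_iff_s10 p n hp (by omega) x).mpr
        ⟨hx0, dvd_trans (dvd_pow_self p (by omega : n - 1 ≠ 0)) ⟨b, hb⟩⟩, ?_, ?_⟩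
      · intro h
        exact h2 (dvd_trans (pow_dvd_pow p (by omega : 2 ≤ n - 1)) (by rw [← h]; exact ⟨b, hb⟩))
      · rw [zd_mul_eq_zero]
        exact pn_dvd_mul p n 1 (n - 1) (by omega) (by rw [pow_one]; exact ⟨k, hkeq⟩) ⟨b, hb⟩
  rw [ncard_nbhd, hset]
  have := count_lemma p n (n - 1) hp (by omega)
  simpa [show n - (n - 1) = 1 by omega] using this

lemma deg_lb (p n : ℕ) (hp : p.Prime) (hn : 3 ≤ n) (u : ZeroDivisors (p ^ n)) :
    p - 1 ≤ ((zdGraph (p ^ n)).neighborSet u).ncard := by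
  haveI : NeZero (p ^ n) := ⟨pow_ne_zero n hp.pos.ne'⟩
  obtain ⟨hu0, hup⟩ := (mem_zd_iff_s10 p n hp (by omega) _).mp u.2
  rw [ncard_nbhd]
  by_cases hq : p ^ (n - 1) ∣ (↑u : ZMod (p ^ n)).val
  · have hsub : {x : ZMod (p ^ n) | x.val ≠ 0 ∧ p ∣ x.val} \ {(↑u : ZMod (p ^ n))}
        ⊆ {x : ZMod (p ^ n) | x ∈ ZeroDivisors (p ^ n) ∧ x ≠ ↑u ∧ (↑u : ZMod (p ^ n)) * x = 0} := by
      rintro x ⟨⟨hx0, hxp⟩, hxu⟩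
      refine ⟨(mem_zd_iff_s10 p n hp (by omega) x).mpr ⟨hx0, hxp⟩, hxu, ?_⟩
      rw [zd_mul_eq_zero]
      exact pn_dvd_mul p n (n - 1) 1 (by omega) hq (by rwa [pow_one])
    have hle := Set.ncard_le_ncard hsub (Set.toFinite _)
    have hmem : (↑u : ZMod (p ^ n)) ∈ {x : ZMod (p ^ n) | x.val ≠ 0 ∧ p ∣ x.val} := ⟨hu0, hup⟩
    rw [Set.ncard_diff_singleton_of_mem hmem] at hle
    have hcount := count_lemma p n 1 hp (by omega)
    rw [pow_one] at hcount
    rw [hcount] at hle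
    have hpow : p * p ≤ p ^ (n - 1) := by
      calc p * p = p ^ 2 := (sq p).symm
        _ ≤ p ^ (n - 1) := Nat.pow_le_pow_right hp.pos (by omega)
    have h2p : 2 ≤ p := hp.two_le
    have : p + 1 ≤ p * p := by nlinarith
    omega
  · have hsub : {x : ZMod (p ^ n) | x.val ≠ 0 ∧ p ^ (n - 1) ∣ x.val}
        ⊆ {x : ZMod (p ^ n) | x ∈ ZeroDivisors (p ^ n) ∧ x ≠ ↑u ∧ (↑u : ZMod (p ^ n)) * x = 0} := by
      rintro x ⟨hx0, hxq⟩
      refine ⟨(mem_zd_iff_s10 p n hp (by omega) x).mpr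
        ⟨hx0, dvd_trans (dvd_pow_self p (by omega : n - 1 ≠ 0)) hxq⟩, ?_, ?_⟩
      · rintro rfl; exact hq hxq
      · rw [zd_mul_eq_zero]
        exact pn_dvd_mul p n 1 (n - 1) (by omega) (by rwa [pow_one]) hxq
    have hle := Set.ncard_le_ncard hsub (Set.toFinite _)
    have hcount := count_lemma p n (n - 1) hp (by omega)
    rw [show n - (n - 1) = 1 by omega, pow_one] at hcount
    omega


/-- for n ≥ 3, δ(Γ[Z_{pⁿ}]) = p - 1, attained at every vertex of the form
kp with p ∤ k. -/
theorem stmt10 (p n : ℕ) (hp : p.Prime) (hn : 3 ≤ n) :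
    minDeg (zdGraph (p ^ n)) = p - 1 ∧
    ∀ v : ZeroDivisors (p ^ n), (∃ k : ℕ, ¬ p ∣ k ∧ (v : ZMod (p ^ n)) = ((k * p : ℕ) : ZMod (p ^ n))) →
      ((zdGraph (p ^ n)).neighborSet v).ncard = p - 1 := by
  haveI : NeZero (p ^ n) := ⟨pow_ne_zero n hp.pos.ne'⟩
  have key : ∀ v : ZeroDivisors (p ^ n),
      (∃ k : ℕ, ¬ p ∣ k ∧ (v : ZMod (p ^ n)) = ((k * p : ℕ) : ZMod (p ^ n))) →
      ((zdGraph (p ^ n)).neighborSet v).ncard = p - 1 := by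
    rintro v ⟨k, hk, hkv⟩
    have hval : (v : ZMod (p ^ n)).val = k * p % p ^ n := by rw [hkv, ZMod.val_natCast]
    refine degree_eq p n hp hn v ?_ ?_
    · rw [hval]
      exact (Nat.dvd_mod_iff (dvd_pow_self p (by omega : n ≠ 0))).mpr (dvd_mul_left p k)
    · rw [hval]
      intro h
      have h' : p ^ 2 ∣ k * p := (Nat.dvd_mod_iff (pow_dvd_pow p (by omega : 2 ≤ n))).mp h
      rw [pow_two] at h'
      exact hk ((Nat.mul_dvd_mul_iff_right hp.pos).mp h')
  refine ⟨?_, key⟩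
  have hv0mem : ((p : ℕ) : ZMod (p ^ n)) ∈ ZeroDivisors (p ^ n) := by
    refine (mem_zd_iff_s10 p n hp (by omega) _).mpr ?_
    rw [ZMod.val_natCast, Nat.mod_eq_of_lt (by
      calc p = p ^ 1 := (pow_one p).symm
        _ < p ^ n := Nat.pow_lt_pow_right hp.one_lt (by omega))]
    exact ⟨hp.pos.ne', dvd_rfl⟩
  have hdeg0 : ((zdGraph (p ^ n)).neighborSet ⟨_, hv0mem⟩).ncard = p - 1 :=
    key ⟨_, hv0mem⟩ ⟨1, by simpa using hp.one_lt.ne', by norm_num⟩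
  apply le_antisymm
  · exact Nat.sInf_le ⟨⟨_, hv0mem⟩, hdeg0⟩
  · refine le_csInf ⟨p - 1, ⟨_, hdeg0⟩⟩ ?_
    rintro k ⟨v, rfl⟩
    exact deg_lb p n hp hn v
end

section
/- Let n be composite with at least one nonzero zero divisor in Z_n, and let q be the smallest prime factor of n. Then deleting the set B = {m·(n/q) : 1 ≤ m ≤ q-1} of q-1 vertices from Γ[Z_n] disconnects the graph, provided n is not q^2 (i.e., the graph is not complete). -/
lemma isolated_not_reachable {V : Type*} {G : SimpleGraph V} {w u : V}
    (h : ∀ x, ¬ G.Adj w x) (hne : w ≠ u) : ¬ G.Reachable w u := by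
  intro hr
  obtain ⟨p⟩ := hr
  cases p with
  | nil => exact hne rfl
  | cons h' _ => exact h _ h'

/-- deleting the q-1 vertices B = {m·(n/q) : 1 ≤ m ≤ q-1}, where q is the
smallest prime factor of composite n (n ≠ q²), disconnects Γ[Z_n]. -/
theorem stmt12 (n : ℕ) (hn : ¬ n.Prime) (hne : (ZeroDivisors n).Nonempty)
    (hsq : n ≠ n.minFac ^ 2) :
    (({v : ZeroDivisors n | ∃ m : ℕ, 1 ≤ m ∧ m ≤ n.minFac - 1 ∧
        (v : ZMod n) = ((m * (n / n.minFac) : ℕ) : ZMod n)}).ncard = n.minFac - 1) ∧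
    ¬ ((zdGraph n).induce
        ({v : ZeroDivisors n | ∃ m : ℕ, 1 ≤ m ∧ m ≤ n.minFac - 1 ∧
          (v : ZMod n) = ((m * (n / n.minFac) : ℕ) : ZMod n)}ᶜ)).Preconnected := by
  classical
  have hn0 : n ≠ 0 := by
    rintro rfl
    obtain ⟨x, hx0, y, hy0, hxy⟩ := hne
    haveI : NoZeroDivisors (ZMod 0) := inferInstanceAs (NoZeroDivisors ℤ)
    exact hy0 ((mul_eq_zero.mp hxy).resolve_left hx0)
  have hn1 : n ≠ 1 := by
    rintro rfl
    obtain ⟨x, hx0, -⟩ := hne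
    exact hx0 (Subsingleton.elim _ _)
  haveI : NeZero n := ⟨hn0⟩
  set q := n.minFac with hqdef
  set a := n / q with hadef
  have hq : q.Prime := Nat.minFac_prime hn1
  have hqd : q ∣ n := Nat.minFac_dvd n
  have han : q * a = n := Nat.mul_div_cancel' hqd
  have hq2 : 2 ≤ q := hq.two_le
  clear_value a q
  have ha2 : 2 ≤ a := by
    have h0 : a ≠ 0 := by intro h; rw [h, mul_zero] at han; exact hn0 han.symm
    have h1 : a ≠ 1 := by intro h; rw [h, mul_one] at han; exact hn (han ▸ hq)
    omega
  have hadvq : ¬ a ∣ q := by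
    intro h
    rcases Nat.Prime.eq_one_or_self_of_dvd hq a h with h1 | h1
    · omega
    · exact hsq (by rw [sq, ← han, h1])
  have hval : ∀ m : ℕ, m ≤ q - 1 → ((m * a : ℕ) : ZMod n).val = m * a := by
    intro m hm
    apply ZMod.val_natCast_of_lt
    calc m * a ≤ (q - 1) * a := Nat.mul_le_mul_right a hm
    _ < q * a := by
        apply Nat.mul_lt_mul_of_lt_of_le (by omega) (le_refl a) (by omega)
    _ = n := han
  have hqlt : q < n := by nlinarith
  have halt : a < n := by nlinarith
  have hqne : ((q : ℕ) : ZMod n) ≠ 0 := by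
    intro h
    have h2 := ZMod.val_natCast_of_lt hqlt
    rw [h, ZMod.val_zero] at h2
    omega
  have hane : ((a : ℕ) : ZMod n) ≠ 0 := by
    intro h
    have h2 := ZMod.val_natCast_of_lt halt
    rw [h, ZMod.val_zero] at h2
    omega
  have hZD : ∀ m : ℕ, 1 ≤ m → m ≤ q - 1 → ((m * a : ℕ) : ZMod n) ∈ ZeroDivisors n := by
    intro m h1 h2
    refine ⟨?_, ((q : ℕ) : ZMod n), hqne, ?_⟩
    · intro h
      have h3 := hval m h2
      rw [h, ZMod.val_zero] at h3
      exact Nat.mul_ne_zero (by omega) (by omega) h3.symm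
    · have h4 : ((m * a * q : ℕ) : ZMod n) = 0 := by
        have : n ∣ m * a * q := ⟨m, by rw [← han]; ring⟩
        exact (ZMod.natCast_eq_zero_iff _ _).mpr this
      rw [← Nat.cast_mul]
      exact h4
  have hkey : ∀ z : ZMod n, z ≠ 0 → ((q : ℕ) : ZMod n) * z = 0 →
      ∃ m : ℕ, 1 ≤ m ∧ m ≤ q - 1 ∧ z = ((m * a : ℕ) : ZMod n) := by
    intro z hz h0
    have hcast : ((q * z.val : ℕ) : ZMod n) = 0 := by
      push_cast
      rw [ZMod.natCast_zmod_val]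
      exact h0
    have hdvd : n ∣ q * z.val := (ZMod.natCast_eq_zero_iff _ _).mp hcast
    obtain ⟨k, hk⟩ := hdvd
    have hzak : z.val = a * k := by
      have : q * z.val = q * (a * k) := by rw [hk, ← han]; ring
      exact Nat.eq_of_mul_eq_mul_left (by omega) this
    have hvne : z.val ≠ 0 := fun h => hz ((ZMod.val_eq_zero z).mp h)
    have hvlt : z.val < n := ZMod.val_lt z
    have hk1 : 1 ≤ k := by
      rcases Nat.eq_zero_or_pos k with rfl | h
      · rw [Nat.mul_zero] at hzak; exact absurd hzak hvne
      · exact h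
    have hklt : a * k < a * q := by
      calc a * k = z.val := hzak.symm
      _ < n := hvlt
      _ = a * q := by rw [← han]; ring
    have hkq : k < q := Nat.lt_of_mul_lt_mul_left hklt
    exact ⟨k, hk1, by omega, by rw [← ZMod.natCast_zmod_val z, hzak, Nat.mul_comm]⟩
  constructor
  · -- cardinality
    have himg : Subtype.val '' {v : ZeroDivisors n | ∃ m : ℕ, 1 ≤ m ∧ m ≤ q - 1 ∧
          (v : ZMod n) = ((m * a : ℕ) : ZMod n)}
        = (fun m : ℕ => ((m * a : ℕ) : ZMod n)) '' Set.Icc 1 (q - 1) := by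
      ext x
      constructor
      · rintro ⟨v, ⟨m, h1, h2, h3⟩, rfl⟩
        exact ⟨m, ⟨h1, h2⟩, h3.symm⟩
      · rintro ⟨m, ⟨h1, h2⟩, rfl⟩
        exact ⟨⟨_, hZD m h1 h2⟩, ⟨m, h1, h2, rfl⟩, rfl⟩
    have hinj : Set.InjOn (fun m : ℕ => ((m * a : ℕ) : ZMod n)) (Set.Icc 1 (q - 1)) := by
      intro m1 hm1 m2 hm2 h
      have e1 := hval m1 hm1.2
      have e2 := hval m2 hm2.2
      have h' : ((m1 * a : ℕ) : ZMod n) = ((m2 * a : ℕ) : ZMod n) := h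
      rw [h', e2] at e1
      exact (Nat.eq_of_mul_eq_mul_right (by omega) e1.symm)
    rw [← Set.ncard_image_of_injective _ Subtype.val_injective, himg,
      Set.ncard_image_of_injOn hinj, ← Finset.coe_Icc, Set.ncard_coe_finset, Nat.card_Icc]
    omega
  · -- disconnection
    intro hpre
    have hqZD : ((q : ℕ) : ZMod n) ∈ ZeroDivisors n := by
      refine ⟨hqne, ((a : ℕ) : ZMod n), hane, ?_⟩
      rw [← Nat.cast_mul, han, ZMod.natCast_self]
    have hucast : ((n - q : ℕ) : ZMod n) = - ((q : ℕ) : ZMod n) := by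
      rw [Nat.cast_sub (le_of_lt hqlt), ZMod.natCast_self, zero_sub]
    have hune : ((n - q : ℕ) : ZMod n) ≠ 0 := by
      intro h
      have h2 := ZMod.val_natCast_of_lt (show n - q < n by omega)
      rw [h, ZMod.val_zero] at h2
      omega
    have huZD : ((n - q : ℕ) : ZMod n) ∈ ZeroDivisors n := by
      refine ⟨hune, ((a : ℕ) : ZMod n), hane, ?_⟩
      rw [hucast, neg_mul, ← Nat.cast_mul, han, ZMod.natCast_self, neg_zero]
    have hwS : (⟨_, hqZD⟩ : ZeroDivisors n) ∈ ({v : ZeroDivisors n | ∃ m : ℕ, 1 ≤ m ∧ m ≤ q - 1 ∧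
          (v : ZMod n) = ((m * a : ℕ) : ZMod n)}ᶜ) := by
      rintro ⟨m, h1, h2, h3⟩
      have e1 := hval m h2
      rw [← h3, ZMod.val_natCast_of_lt hqlt] at e1
      exact hadvq ⟨m, by rw [e1, Nat.mul_comm]⟩
    have huS : (⟨_, huZD⟩ : ZeroDivisors n) ∈ ({v : ZeroDivisors n | ∃ m : ℕ, 1 ≤ m ∧ m ≤ q - 1 ∧
          (v : ZMod n) = ((m * a : ℕ) : ZMod n)}ᶜ) := by
      rintro ⟨m, h1, h2, h3⟩
      have e1 := hval m h2
      rw [← h3, ZMod.val_natCast_of_lt (show n - q < n by omega)] at e1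
      have hdn : a ∣ n := ⟨q, by rw [← han]; ring⟩
      have hdnq : a ∣ n - q := ⟨m, by rw [e1, Nat.mul_comm]⟩
      have : a ∣ q := by
        have h5 : q = n - (n - q) := by omega
        rw [h5]
        exact Nat.dvd_sub hdn hdnq
      exact hadvq this
    have hwu : (⟨_, hqZD⟩ : ZeroDivisors n) ≠ ⟨_, huZD⟩ := by
      intro h
      have h2 : ((q : ℕ) : ZMod n) = ((n - q : ℕ) : ZMod n) := congrArg Subtype.val h
      have e1 := ZMod.val_natCast_of_lt hqlt
      rw [h2, ZMod.val_natCast_of_lt (show n - q < n by omega)] at e1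
      -- q = n - q, so n = 2q, so q = 2 (since 2 ∣ n and q is minFac), so n = 4 = q^2
      have hn2q : n = 2 * q := by omega
      have h2d : (2 : ℕ) ∣ n := ⟨q, hn2q⟩
      have : q ≤ 2 := hqdef ▸ Nat.minFac_le_of_dvd (le_refl 2) h2d
      have hq2' : q = 2 := by omega
      exact hsq (by rw [sq, hq2']; omega)
    have hiso : ∀ x, ¬ ((zdGraph n).induce
        ({v : ZeroDivisors n | ∃ m : ℕ, 1 ≤ m ∧ m ≤ q - 1 ∧
          (v : ZMod n) = ((m * a : ℕ) : ZMod n)}ᶜ)).Adj ⟨⟨_, hqZD⟩, hwS⟩ x := by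
      rintro ⟨⟨x, hxZD⟩, hxS⟩ hadj
      have hmul : ((q : ℕ) : ZMod n) * x = 0 := And.right hadj
      exact hxS (hkey x hxZD.1 hmul)
    exact isolated_not_reachable hiso
      (fun h => hwu (congrArg Subtype.val h)) (hpre ⟨⟨_, hqZD⟩, hwS⟩ ⟨⟨_, huZD⟩, huS⟩)
end
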